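/- Let i be a buyer reporting her true type θ_i and let θ' = (θ_i, θ'_{-i}). Then her expected utility in PDA satisfies E_PDA(u_i) ≥ Σ_{B ⊆ V∖{i}} [|B|!·(|V|−|B|−1)!/|V|!] · μ(θ'_B) · (SW*(θ', B∪{i}) − SW*(θ', B)). Consequently, (inf_B μ(θ'_B)) · φ_i(θ') ≤ E_PDA(u_i) ≤ φ_i(θ'): the ratio between her expected PDA utility and her Shapley contribution is at least the infimum probability that all items remain unsold, and her expected utility never exceeds her Shapley contribution. -/

import Mathlib

namespace DA

open scoped Classical

/-- A report profile for selling `k` homogeneous items: each agent reports a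
valuation over quantities `0, …, k` and a set of neighbors. -/
structure Profile (V : Type*) (k : ℕ) where
  val : V → ℕ → ℝ
  nbr : V → Set V

/-- A valuation is valid if it is normalized (`v 0 = 0`) and has
non-increasing marginals on `{0, …, k}`. -/
def ValidVal (k : ℕ) (v : ℕ → ℝ) : Prop :=
  v 0 = 0 ∧ ∀ q : ℕ, q + 2 ≤ k → v (q + 2) - v (q + 1) ≤ v (q + 1) - v q

variable {V : Type*}

/-- A profile is valid (w.r.t. seller `s`) if every buyer's valuation is valid. -/
def Profile.Valid {k : ℕ} (θ : Profile V k) (s : V) : Prop :=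
  ∀ i : V, i ≠ s → ValidVal k (θ.val i)

/-- The reported (undirected) adjacency: `{i, j}` is an edge whenever
`j ∈ r'_i` (or symmetrically `i ∈ r'_j`). -/
def Profile.adj {k : ℕ} (θ : Profile V k) (i j : V) : Prop :=
  j ∈ θ.nbr i ∨ i ∈ θ.nbr j

/-- The feasible set `F(θ', B)` of a coalition `B`: the buyers in `B` that are
connected to the seller `s` by a path of reported edges lying inside `B`
(empty if `s ∉ B`). -/
def Profile.feasible {k : ℕ} (θ : Profile V k) (s : V) (B : Set V) : Set V :=
  {i | i ≠ s ∧ i ∈ B ∧ s ∈ B ∧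
    Relation.ReflTransGen (fun a b => θ.adj a b ∧ a ∈ B ∧ b ∈ B) s i}

/-- Updating agent `i`'s report in a profile. -/
def updateAgent [DecidableEq V] {k : ℕ} (θ : Profile V k) (i : V)
    (v : ℕ → ℝ) (r : Set V) : Profile V k :=
  ⟨Function.update θ.val i v, Function.update θ.nbr i r⟩

/-- The profile `θ'_B` obtained by removing (setting to nil) the reports of
all agents outside the coalition `B`. -/
noncomputable def Profile.restrict {k : ℕ} (θ : Profile V k) (B : Set V) : Profile V k :=
  ⟨fun i q => if i ∈ B then θ.val i q else 0,
   fun i => if i ∈ B then θ.nbr i ∩ B else ∅⟩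

section Homogeneous

variable [Fintype V] [DecidableEq V]

/-- Social welfare of an allocation `π` under reports `θ`. -/
def SW {k : ℕ} (θ : Profile V k) (s : V) (π : V → ℕ) : ℝ :=
  ∑ i ∈ Finset.univ.erase s, θ.val i (π i)

/-- The allocations admissible for a coalition `B` with irrevocable prior
allocation `πhat`: at most `k` items in total are allocated (none to the
seller), only buyers in `F(θ, B)` receive items, and nobody receives fewer
items than in `πhat`. -/
def feasAllocs {k : ℕ} (θ : Profile V k) (s : V) (B : Set V) (πhat : V → ℕ) :
    Set (V → ℕ) :=
  {π | π s = 0 ∧ (∑ i ∈ Finset.univ.erase s, π i) ≤ k ∧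
    (∀ i, i ∉ θ.feasible s B → π i = 0) ∧ ∀ j, j ≠ s → πhat j ≤ π j}

/-- `SW*(θ, B, πhat)`: the maximum social welfare over the admissible
allocations for coalition `B` with prior allocation `πhat`. -/
noncomputable def SWstar {k : ℕ} (θ : Profile V k) (s : V) (B : Set V)
    (πhat : V → ℕ) : ℝ :=
  sSup (SW θ s '' feasAllocs θ s B πhat)

/-- A chosen allocation attaining `SW*(θ, B, πhat)`. -/
noncomputable def bestAlloc {k : ℕ} (θ : Profile V k) (s : V) (B : Set V)
    (πhat : V → ℕ) : V → ℕ :=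
  Classical.epsilon fun π =>
    π ∈ feasAllocs θ s B πhat ∧ SW θ s π = SWstar θ s B πhat

/-- `o_{≺i}`: the set of agents strictly preceding `i` in the order `o`. -/
def pred (o : V ≃ Fin (Fintype.card V)) (i : V) : Set V := {j | o j < o i}

/-- `o_{≼i} = o_{≺i} ∪ {i}`. -/
def predeq (o : V ≃ Fin (Fintype.card V)) (i : V) : Set V := {j | o j ≤ o i}

/-- The partial allocation produced by PDA after the first `t` agents of the
order `o` have been traversed: the seller is skipped, and each traversed buyer
`i` receives her share in a chosen allocation attaining
`SW*(θ, o_{≼i}, π^{o≺i})`, earlier allocations being irrevocable. -/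
noncomputable def pdaStep {k : ℕ} (θ : Profile V k) (s : V)
    (o : V ≃ Fin (Fintype.card V)) : ℕ → V → ℕ
  | 0 => fun _ => 0
  | t + 1 =>
    if h : t < Fintype.card V then
      let i := o.symm ⟨t, h⟩
      if i = s then pdaStep θ s o t
      else Function.update (pdaStep θ s o t) i
        (bestAlloc θ s (predeq o i) (pdaStep θ s o t) i)
    else pdaStep θ s o t

/-- `π^{o≺i}`: the allocation fixed by PDA right before agent `i` is traversed. -/
noncomputable def pdaPrior {k : ℕ} (θ : Profile V k) (s : V)
    (o : V ≃ Fin (Fintype.card V)) (i : V) : V → ℕ :=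
  pdaStep θ s o (o i : ℕ)

/-- The final allocation `π^o` produced by PDA under the order `o`. -/
noncomputable def pdaAlloc {k : ℕ} (θ : Profile V k) (s : V)
    (o : V ≃ Fin (Fintype.card V)) : V → ℕ :=
  pdaStep θ s o (Fintype.card V)

/-- The payment charged by PDA to agent `i` under the order `o`:
`p_i = SW*(θ, o_{≺i}, π^{o≺i}) − SW*(θ, o_{≼i}, π^{o≺i}) + v'_i(π_i)`, except
that agents traversed after all `k` items have been allocated pay `0`
(and the seller pays nothing). -/
noncomputable def pdaPay {k : ℕ} (θ : Profile V k) (s : V)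
    (o : V ≃ Fin (Fintype.card V)) (i : V) : ℝ :=
  if i = s then 0
  else if (∑ j ∈ Finset.univ.erase s, pdaPrior θ s o i j) = k then 0
  else SWstar θ s (pred o i) (pdaPrior θ s o i)
    - SWstar θ s (predeq o i) (pdaPrior θ s o i)
    + θ.val i (pdaAlloc θ s o i)

/-- `u_i^o`: the utility of buyer `i` with true valuation `v` under order `o`. -/
noncomputable def pdaUtil {k : ℕ} (v : ℕ → ℝ) (θ : Profile V k) (s : V)
    (o : V ≃ Fin (Fintype.card V)) (i : V) : ℝ :=
  v (pdaAlloc θ s o i) - pdaPay θ s o i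

/-- `E_PDA(u_i)`: buyer `i`'s expected utility over the uniformly random order. -/
noncomputable def pdaExpUtil {k : ℕ} (v : ℕ → ℝ) (θ : Profile V k) (s : V)
    (i : V) : ℝ :=
  (∑ o : V ≃ Fin (Fintype.card V), pdaUtil v θ s o i) /
    ((Fintype.card V).factorial : ℝ)

/-- `μ(θ)`: the fraction of orders for which PDA terminates with no item sold. -/
noncomputable def mu {k : ℕ} (θ : Profile V k) (s : V) : ℝ :=
  (Nat.card {o : V ≃ Fin (Fintype.card V) // ∀ j, pdaAlloc θ s o j = 0} : ℝ) /
    ((Fintype.card V).factorial : ℝ)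

/-- The Shapley contribution `φ_i(θ)` of agent `i`. -/
noncomputable def shapley {k : ℕ} (θ : Profile V k) (s : V) (i : V) : ℝ :=
  ∑ B ∈ (Finset.univ.erase i).powerset,
    ((B.card.factorial * (Fintype.card V - B.card - 1).factorial : ℝ) /
      ((Fintype.card V).factorial : ℝ)) *
    (SWstar θ s (↑(insert i B)) 0 - SWstar θ s (↑B) 0)

end Homogeneous

end DA
namespace DA

variable {V : Type*} [Fintype V] [DecidableEq V] {k : ℕ}

section Basic
variable (θ : Profile V k) (s : V)

lemma feasible_mono {B B' : Set V} (h : B ⊆ B') :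
    θ.feasible s B ⊆ θ.feasible s B' := by
  rintro x ⟨hx, hxB, hsB, hr⟩
  exact ⟨hx, h hxB, h hsB,
    Relation.ReflTransGen.mono (fun a b hab => ⟨hab.1, h hab.2.1, h hab.2.2⟩) _ _ hr⟩

lemma zero_mem_feasAllocs (B : Set V) : (0 : V → ℕ) ∈ feasAllocs θ s B 0 := by
  refine ⟨rfl, ?_, fun i _ => rfl, fun j _ => le_refl _⟩
  simp

lemma feasAllocs_finite (B : Set V) (πh : V → ℕ) : (feasAllocs θ s B πh).Finite := by
  apply Set.Finite.subset (Set.Finite.pi (fun _ : V => Set.finite_Iic k))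
  intro π hπ
  simp only [Set.mem_pi, Set.mem_univ, Set.mem_Iic, forall_true_left]
  intro j
  by_cases hj : j = s
  · subst hj; simp [hπ.1]
  · calc π j ≤ ∑ i ∈ Finset.univ.erase s, π i :=
        Finset.single_le_sum (fun i _ => Nat.zero_le _)
          (Finset.mem_erase.2 ⟨hj, Finset.mem_univ _⟩)
    _ ≤ k := hπ.2.1

lemma SW_bddAbove (B : Set V) (πh : V → ℕ) :
    BddAbove (SW θ s '' feasAllocs θ s B πh) :=
  ((feasAllocs_finite θ s B πh).image _).bddAbove

lemma SW_le_SWstar {B : Set V} {πh π : V → ℕ} (h : π ∈ feasAllocs θ s B πh) :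
    SW θ s π ≤ SWstar θ s B πh :=
  le_csSup (SW_bddAbove θ s B πh) ⟨π, h, rfl⟩

lemma bestAlloc_spec {B : Set V} {πh : V → ℕ} (h : (feasAllocs θ s B πh).Nonempty) :
    bestAlloc θ s B πh ∈ feasAllocs θ s B πh ∧
      SW θ s (bestAlloc θ s B πh) = SWstar θ s B πh := by
  have hfin : (SW θ s '' feasAllocs θ s B πh).Finite := (feasAllocs_finite θ s B πh).image _
  obtain ⟨π, hπ, hsw⟩ := (h.image (SW θ s)).csSup_mem hfin
  exact Classical.epsilon_spec
    (p := fun π => π ∈ feasAllocs θ s B πh ∧ SW θ s π = SWstar θ s B πh) ⟨π, hπ, hsw⟩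

lemma SWstar_le_SWstar {B B' : Set V} {πh πh' : V → ℕ}
    (hsub : feasAllocs θ s B πh ⊆ feasAllocs θ s B' πh')
    (hne : (feasAllocs θ s B πh).Nonempty) :
    SWstar θ s B πh ≤ SWstar θ s B' πh' :=
  csSup_le_csSup (SW_bddAbove θ s B' πh') (hne.image _) (Set.image_mono hsub)

lemma feasAllocs_mono {B B' : Set V} (πh : V → ℕ)
    (h : θ.feasible s B ⊆ θ.feasible s B') :
    feasAllocs θ s B πh ⊆ feasAllocs θ s B' πh := by
  rintro π ⟨h1, h2, h3, h4⟩
  exact ⟨h1, h2, fun i hi => h3 i (fun hmem => hi (h hmem)), h4⟩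

lemma SW_zero (hθ : θ.Valid s) : SW θ s (0 : V → ℕ) = 0 := by
  apply Finset.sum_eq_zero
  intro j hj
  exact (hθ j (Finset.mem_erase.1 hj).1).1

lemma SWstar_zero_nonneg (hθ : θ.Valid s) (B : Set V) : 0 ≤ SWstar θ s B 0 := by
  have := SW_le_SWstar θ s (zero_mem_feasAllocs θ s B)
  rwa [SW_zero θ s hθ] at this

lemma SWstar_zero_mono (hθ : θ.Valid s) {B B' : Set V} (h : B ⊆ B') :
    SWstar θ s B 0 ≤ SWstar θ s B' 0 :=
  SWstar_le_SWstar θ s (feasAllocs_mono θ s 0 (feasible_mono θ s h))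
    ⟨0, zero_mem_feasAllocs θ s B⟩

lemma marg_antitone {v : ℕ → ℝ} (hv : ValidVal k v) {p q : ℕ} (hpq : p ≤ q)
    (hq : q + 1 ≤ k) : v (q + 1) - v q ≤ v (p + 1) - v p := by
  induction q, hpq using Nat.le_induction with
  | base => exact le_refl _
  | succ n hn ih =>
      exact le_trans (hv.2 n (by omega)) (ih (by omega))

end Basic
end DA
namespace DA

set_option linter.unusedSectionVars false
set_option linter.unusedVariables false

variable {V : Type*} [Fintype V] [DecidableEq V] {k : ℕ}

section Exchange
variable (θ : Profile V k) (s : V)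

lemma SW_update (f : V → ℕ) {a : V} (ha : a ≠ s) (x : ℕ) :
    SW θ s (Function.update f a x) = SW θ s f - θ.val a (f a) + θ.val a x := by
  have hmem : a ∈ Finset.univ.erase s := Finset.mem_erase.2 ⟨ha, Finset.mem_univ _⟩
  unfold SW
  rw [← Finset.add_sum_erase _ (fun i => θ.val i (Function.update f a x i)) hmem,
      ← Finset.add_sum_erase _ (fun i => θ.val i (f i)) hmem]
  have h1 : ∀ j ∈ (Finset.univ.erase s).erase a,
      θ.val j (Function.update f a x j) = θ.val j (f j) := by
    intro j hj
    rw [Function.update_of_ne (Finset.mem_erase.1 hj).1]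
  rw [Finset.sum_congr rfl h1, Function.update_self]
  ring

omit [Fintype V] in
lemma _root_.DA.dummy_unused : True := trivial

end Exchange

section SumLemmas
variable (s : V)

lemma sum_update_nat (f : V → ℕ) {a : V} (ha : a ≠ s) (x : ℕ) :
    ∑ j ∈ Finset.univ.erase s, Function.update f a x j
      = x + ∑ j ∈ (Finset.univ.erase s).erase a, f j := by
  have hmem : a ∈ Finset.univ.erase s := Finset.mem_erase.2 ⟨ha, Finset.mem_univ _⟩
  rw [← Finset.add_sum_erase _ (fun i => Function.update f a x i) hmem,
      Function.update_self]
  congr 1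
  exact Finset.sum_congr rfl fun j hj =>
    Function.update_of_ne (Finset.mem_erase.1 hj).1 _ _

lemma sum_split_nat (f : V → ℕ) {a : V} (ha : a ≠ s) :
    ∑ j ∈ Finset.univ.erase s, f j = f a + ∑ j ∈ (Finset.univ.erase s).erase a, f j :=
  (Finset.add_sum_erase _ f (Finset.mem_erase.2 ⟨ha, Finset.mem_univ _⟩)).symm

lemma sum_pair_nat (f g : V → ℕ) {a c : V} (ha : a ≠ s) (hc : c ≠ s) (hac : c ≠ a)
    (hfg : ∀ j, j ≠ a → j ≠ c → f j = g j) :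
    ∑ j ∈ Finset.univ.erase s, f j + g a + g c
      = ∑ j ∈ Finset.univ.erase s, g j + f a + f c := by
  have hmem_a : a ∈ Finset.univ.erase s := Finset.mem_erase.2 ⟨ha, Finset.mem_univ _⟩
  have hmem_c : c ∈ (Finset.univ.erase s).erase a :=
    Finset.mem_erase.2 ⟨hac, Finset.mem_erase.2 ⟨hc, Finset.mem_univ _⟩⟩
  have e1 : ∀ h : V → ℕ, ∑ j ∈ Finset.univ.erase s, h j
      = h a + (h c + ∑ j ∈ ((Finset.univ.erase s).erase a).erase c, h j) := by
    intro h
    rw [← Finset.add_sum_erase _ h hmem_a, ← Finset.add_sum_erase _ h hmem_c]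
  have e2 : ∑ j ∈ ((Finset.univ.erase s).erase a).erase c, f j
      = ∑ j ∈ ((Finset.univ.erase s).erase a).erase c, g j := by
    refine Finset.sum_congr rfl fun j hj => ?_
    have hj1 := (Finset.mem_erase.1 hj).1
    have hj2 := (Finset.mem_erase.1 (Finset.mem_erase.1 hj).2).1
    exact hfg j hj2 hj1
  rw [e1 f, e1 g, e2]
  omega

end SumLemmas

section Exchange2
variable (θ : Profile V k) (s : V)

lemma SWstar_exchange_step (hθ : θ.Valid s) {C D : Set V} (hCD : C ⊆ D)
    {πh : V → ℕ} (h0 : πh s = 0)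
    (hsupp : ∀ j, j ∉ θ.feasible s C → πh j = 0)
    {a : V} (ha : a ∈ θ.feasible s C)
    (hsum : (∑ j ∈ Finset.univ.erase s, πh j) + 1 ≤ k) :
    SWstar θ s D (Function.update πh a (πh a + 1)) + SWstar θ s C πh
      ≤ SWstar θ s D πh + SWstar θ s C (Function.update πh a (πh a + 1)) := by
  have has : a ≠ s := ha.1
  have hfeasCD : θ.feasible s C ⊆ θ.feasible s D := feasible_mono θ s hCD
  set πh' := Function.update πh a (πh a + 1) with hπh'
  have hπh'a : πh' a = πh a + 1 := Function.update_self _ _ _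
  have hπh'ne : ∀ j, j ≠ a → πh' j = πh j := fun j hj => Function.update_of_ne hj _ _
  have hle : ∀ j, πh j ≤ πh' j := by
    intro j; rcases eq_or_ne j a with rfl | hj
    · rw [hπh'a]; omega
    · rw [hπh'ne j hj]
  have hsum' : ∑ j ∈ Finset.univ.erase s, πh' j
      = (∑ j ∈ Finset.univ.erase s, πh j) + 1 := by
    rw [hπh', sum_update_nat s πh has, sum_split_nat s πh has]
    omega
  have hπh's : πh' s = 0 := by rw [hπh'ne s (Ne.symm has)]; exact h0
  have hπh'memC : πh' ∈ feasAllocs θ s C πh' := by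
    refine ⟨hπh's, by omega, ?_, fun j _ => le_refl _⟩
    intro j hj
    have hja : j ≠ a := fun h => hj (h ▸ ha)
    rw [hπh'ne j hja]; exact hsupp j hj
  have hπhmemC : πh ∈ feasAllocs θ s C πh :=
    ⟨h0, by omega, hsupp, fun j _ => le_refl _⟩
  have hneD' : (feasAllocs θ s D πh').Nonempty :=
    ⟨πh', feasAllocs_mono θ s πh' hfeasCD hπh'memC⟩
  have hneC : (feasAllocs θ s C πh).Nonempty := ⟨πh, hπhmemC⟩
  obtain ⟨hαm, hαsw⟩ := bestAlloc_spec θ s hneD'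
  obtain ⟨hβm, hβsw⟩ := bestAlloc_spec θ s hneC
  set α := bestAlloc θ s D πh' with hα
  set β := bestAlloc θ s C πh with hβ
  have hαa : πh a + 1 ≤ α a := hπh'a ▸ hαm.2.2.2 a has
  have hαk := hαm.2.1
  have hβk := hβm.2.1
  have hαs := hαm.1
  have hβs := hβm.1
  rcases le_or_gt (πh a + 1) (β a) with hβa | hβa
  · have hαmem : α ∈ feasAllocs θ s D πh :=
      ⟨hαs, hαk, hαm.2.2.1, fun j hj => le_trans (hle j) (hαm.2.2.2 j hj)⟩
    have hβmem : β ∈ feasAllocs θ s C πh' := by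
      refine ⟨hβs, hβk, hβm.2.2.1, ?_⟩
      intro j hj
      rcases eq_or_ne j a with rfl | hja
      · rw [hπh'a]; exact hβa
      · rw [hπh'ne j hja]; exact hβm.2.2.2 j hj
    rw [← hαsw, ← hβsw]
    exact add_le_add (SW_le_SWstar θ s hαmem) (SW_le_SWstar θ s hβmem)
  · have hβa' : β a = πh a := le_antisymm (by omega) (hβm.2.2.2 a has)
    have hva : ValidVal k (θ.val a) := hθ a has
    have hαak : α a ≤ k := by
      have := sum_split_nat s α has
      omega
    rcases lt_or_ge (∑ j ∈ Finset.univ.erase s, β j) k with hlt | hge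
    · set γ := Function.update α a (α a - 1) with hγ
      set δ := Function.update β a (β a + 1) with hδ
      have hsumγ : (∑ j ∈ Finset.univ.erase s, γ j) + 1
          = ∑ j ∈ Finset.univ.erase s, α j := by
        rw [hγ, sum_update_nat s α has, sum_split_nat s α has]
        omega
      have hsumδ : ∑ j ∈ Finset.univ.erase s, δ j
          = (∑ j ∈ Finset.univ.erase s, β j) + 1 := by
        rw [hδ, sum_update_nat s β has, sum_split_nat s β has]
        omega
      have hγmem : γ ∈ feasAllocs θ s D πh := by
        have hγs : γ s = 0 := by rw [hγ, Function.update_of_ne (Ne.symm has)]; exact hαs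
        refine ⟨hγs, by omega, ?_, ?_⟩
        · intro j hj
          have hja : j ≠ a := fun h => hj (h ▸ hfeasCD ha)
          rw [hγ, Function.update_of_ne hja]
          exact hαm.2.2.1 j hj
        · intro j hj
          rcases eq_or_ne j a with rfl | hja
          · rw [hγ, Function.update_self]; omega
          · rw [hγ, Function.update_of_ne hja]
            exact le_trans (hle j) (hαm.2.2.2 j hj)
      have hδmem : δ ∈ feasAllocs θ s C πh' := by
        have hδs : δ s = 0 := by rw [hδ, Function.update_of_ne (Ne.symm has)]; exact hβs
        refine ⟨hδs, by omega, ?_, ?_⟩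
        · intro j hj
          have hja : j ≠ a := fun h => hj (h ▸ ha)
          rw [hδ, Function.update_of_ne hja]
          exact hβm.2.2.1 j hj
        · intro j hj
          rcases eq_or_ne j a with rfl | hja
          · rw [hδ, Function.update_self, hπh'a, hβa']
          · rw [hδ, Function.update_of_ne hja, hπh'ne j hja]
            exact hβm.2.2.2 j hj
      have hSWγ : SW θ s γ = SW θ s α - θ.val a (α a) + θ.val a (α a - 1) :=
        SW_update θ s α has _
      have hSWδ : SW θ s δ = SW θ s β - θ.val a (β a) + θ.val a (β a + 1) :=
        SW_update θ s β has _
      have hconc : θ.val a (α a) - θ.val a (α a - 1)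
          ≤ θ.val a (πh a + 1) - θ.val a (πh a) := by
        have h1 : α a - 1 + 1 = α a := by omega
        have := marg_antitone hva (p := πh a) (q := α a - 1) (by omega) (by omega)
        rwa [h1] at this
      have h2 := SW_le_SWstar θ s hγmem
      have h3 := SW_le_SWstar θ s hδmem
      rw [← hαsw, ← hβsw]
      rw [hβa'] at hSWδ
      linarith
    · have hkk : ∑ j ∈ Finset.univ.erase s, β j = k := le_antisymm hβk hge
      have hex : ∃ c, πh c < β c ∧ α c < β c := by
        by_contra hno
        push_neg at hno
        have hpt : ∀ j ∈ Finset.univ.erase s, β j ≤ α j := by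
          intro j hj
          rcases lt_or_ge (πh j) (β j) with h1 | h1
          · exact hno j h1
          · exact le_trans h1 (le_trans (hle j) (hαm.2.2.2 j (Finset.mem_erase.1 hj).1))
        have hstrict : ∑ j ∈ Finset.univ.erase s, β j < ∑ j ∈ Finset.univ.erase s, α j :=
          Finset.sum_lt_sum hpt ⟨a, Finset.mem_erase.2 ⟨has, Finset.mem_univ _⟩, by omega⟩
        omega
      obtain ⟨c, hc1, hc2⟩ := hex
      have hca : c ≠ a := by intro h; rw [h, hβa'] at hc1; omega
      have hcs : c ≠ s := by intro h; rw [h, hβs] at hc1; omega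
      have hcfeas : c ∈ θ.feasible s C := by
        by_contra hcf
        have := hβm.2.2.1 c hcf
        omega
      have hβck : β c ≤ k := by
        have := sum_split_nat s β hcs
        omega
      set γ := Function.update (Function.update α a (α a - 1)) c (α c + 1) with hγ
      set δ := Function.update (Function.update β a (β a + 1)) c (β c - 1) with hδ
      have hγa : γ a = α a - 1 := by
        rw [hγ, Function.update_of_ne (Ne.symm hca), Function.update_self]
      have hγc : γ c = α c + 1 := by rw [hγ, Function.update_self]
      have hγne : ∀ j, j ≠ a → j ≠ c → γ j = α j := by
        intro j hja hjc
        rw [hγ, Function.update_of_ne hjc, Function.update_of_ne hja]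
      have hδa : δ a = β a + 1 := by
        rw [hδ, Function.update_of_ne (Ne.symm hca), Function.update_self]
      have hδc : δ c = β c - 1 := by rw [hδ, Function.update_self]
      have hδne : ∀ j, j ≠ a → j ≠ c → δ j = β j := by
        intro j hja hjc
        rw [hδ, Function.update_of_ne hjc, Function.update_of_ne hja]
      have hsumγ : ∑ j ∈ Finset.univ.erase s, γ j = ∑ j ∈ Finset.univ.erase s, α j := by
        have := sum_pair_nat s γ α has hcs hca hγne
        rw [hγa, hγc] at this
        omega
      have hsumδ : ∑ j ∈ Finset.univ.erase s, δ j = ∑ j ∈ Finset.univ.erase s, β j := by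
        have := sum_pair_nat s δ β has hcs hca hδne
        rw [hδa, hδc] at this
        omega
      have hγs : γ s = 0 := by rw [hγne s (Ne.symm has) (Ne.symm hcs)]; exact hαs
      have hδs : δ s = 0 := by rw [hδne s (Ne.symm has) (Ne.symm hcs)]; exact hβs
      have hγmem : γ ∈ feasAllocs θ s D πh := by
        refine ⟨hγs, by omega, ?_, ?_⟩
        · intro j hj
          have hja : j ≠ a := fun h => hj (h ▸ hfeasCD ha)
          have hjc : j ≠ c := fun h => hj (h ▸ hfeasCD hcfeas)
          rw [hγne j hja hjc]
          exact hαm.2.2.1 j hj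
        · intro j hj
          rcases eq_or_ne j a with rfl | hja
          · rw [hγa]; omega
          rcases eq_or_ne j c with rfl | hjc
          · rw [hγc]
            have := hαm.2.2.2 j hj
            have := hπh'ne j hja
            omega
          · rw [hγne j hja hjc]
            exact le_trans (hle j) (hαm.2.2.2 j hj)
      have hδmem : δ ∈ feasAllocs θ s C πh' := by
        refine ⟨hδs, by omega, ?_, ?_⟩
        · intro j hj
          have hja : j ≠ a := fun h => hj (h ▸ ha)
          have hjc : j ≠ c := fun h => hj (h ▸ hcfeas)
          rw [hδne j hja hjc]
          exact hβm.2.2.1 j hj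
        · intro j hj
          rcases eq_or_ne j a with rfl | hja
          · rw [hδa, hπh'a, hβa']
          rcases eq_or_ne j c with rfl | hjc
          · rw [hδc, hπh'ne j hja]; omega
          · rw [hδne j hja hjc, hπh'ne j hja]
            exact hβm.2.2.2 j hj
      have hSWγ : SW θ s γ = SW θ s α - θ.val a (α a) + θ.val a (α a - 1)
          - θ.val c (α c) + θ.val c (α c + 1) := by
        rw [hγ, SW_update θ s _ hcs, SW_update θ s α has,
            Function.update_of_ne hca]
      have hSWδ : SW θ s δ = SW θ s β - θ.val a (β a) + θ.val a (β a + 1)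
          - θ.val c (β c) + θ.val c (β c - 1) := by
        rw [hδ, SW_update θ s _ hcs, SW_update θ s β has,
            Function.update_of_ne hca]
      have hconc1 : θ.val a (α a) - θ.val a (α a - 1)
          ≤ θ.val a (πh a + 1) - θ.val a (πh a) := by
        have h1 : α a - 1 + 1 = α a := by omega
        have := marg_antitone hva (p := πh a) (q := α a - 1) (by omega) (by omega)
        rwa [h1] at this
      have hconc2 : θ.val c (β c) - θ.val c (β c - 1)
          ≤ θ.val c (α c + 1) - θ.val c (α c) := by
        have hvc : ValidVal k (θ.val c) := hθ c hcs
        have h1 : β c - 1 + 1 = β c := by omega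
        have := marg_antitone hvc (p := α c) (q := β c - 1) (by omega) (by omega)
        rwa [h1] at this
      have h2 := SW_le_SWstar θ s hγmem
      have h3 := SW_le_SWstar θ s hδmem
      rw [← hαsw, ← hβsw]
      rw [hβa'] at hSWδ
      linarith

lemma SWstar_diff_le (hθ : θ.Valid s) {C D : Set V} (hCD : C ⊆ D)
    {πh : V → ℕ} (hk : (∑ j ∈ Finset.univ.erase s, πh j) ≤ k) (h0 : πh s = 0)
    (hsupp : ∀ j, j ∉ θ.feasible s C → πh j = 0) :
    SWstar θ s D πh - SWstar θ s C πh ≤ SWstar θ s D 0 - SWstar θ s C 0 := by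
  obtain ⟨m, hm⟩ : ∃ m, ∑ j ∈ Finset.univ.erase s, πh j = m := ⟨_, rfl⟩
  induction m generalizing πh with
  | zero =>
      have : πh = 0 := by
        funext j
        by_cases hj : j = s
        · rw [hj]; exact h0
        · exact (Finset.sum_eq_zero_iff).1 hm j (Finset.mem_erase.2 ⟨hj, Finset.mem_univ _⟩)
      rw [this]
  | succ n ih =>
      obtain ⟨a, ha, hpa⟩ : ∃ a, a ≠ s ∧ 0 < πh a := by
        by_contra hno
        push_neg at hno
        have : ∑ j ∈ Finset.univ.erase s, πh j = 0 :=
          Finset.sum_eq_zero fun j hj => by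
            have := hno j (Finset.mem_erase.1 hj).1
            omega
        omega
      have hafeas : a ∈ θ.feasible s C := by
        by_contra hcf
        have := hsupp a hcf
        omega
      set π0 := Function.update πh a (πh a - 1) with hπ0
      have hπ0a : π0 a = πh a - 1 := Function.update_self _ _ _
      have hπ0ne : ∀ j, j ≠ a → π0 j = πh j := fun j hj => Function.update_of_ne hj _ _
      have hsum0 : (∑ j ∈ Finset.univ.erase s, π0 j) + 1
          = ∑ j ∈ Finset.univ.erase s, πh j := by
        rw [hπ0, sum_update_nat s πh ha, sum_split_nat s πh ha]
        omega
      have h00 : π0 s = 0 := by rw [hπ0ne s (Ne.symm ha)]; exact h0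
      have hsupp0 : ∀ j, j ∉ θ.feasible s C → π0 j = 0 := by
        intro j hj
        have hja : j ≠ a := fun h => hj (h ▸ hafeas)
        rw [hπ0ne j hja]; exact hsupp j hj
      have hrw : Function.update π0 a (π0 a + 1) = πh := by
        funext j
        rcases eq_or_ne j a with rfl | hj
        · rw [Function.update_self, hπ0a]; omega
        · rw [Function.update_of_ne hj, hπ0ne j hj]
      have hstep := SWstar_exchange_step θ s hθ hCD h00 hsupp0 hafeas (by omega)
      rw [hrw] at hstep
      have hih := ih (by omega) h00 hsupp0 (by omega)
      linarith

end Exchange2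
end DA
namespace DA

set_option linter.unusedSectionVars false
set_option linter.unusedVariables false

variable {V : Type*} [Fintype V] [DecidableEq V] {k : ℕ}

section Run
variable (θ : Profile V k) (s : V) (o : V ≃ Fin (Fintype.card V))

lemma pdaStep_succ (t : ℕ) (h : t < Fintype.card V) :
    pdaStep θ s o (t + 1) =
      if o.symm ⟨t, h⟩ = s then pdaStep θ s o t
      else Function.update (pdaStep θ s o t) (o.symm ⟨t, h⟩)
        (bestAlloc θ s (predeq o (o.symm ⟨t, h⟩)) (pdaStep θ s o t) (o.symm ⟨t, h⟩)) := by
  rw [pdaStep, dif_pos h]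

lemma pdaStep_succ_ge (t : ℕ) (h : ¬ t < Fintype.card V) :
    pdaStep θ s o (t + 1) = pdaStep θ s o t := by
  rw [pdaStep, dif_neg h]

lemma symm_ne_of_ne {t : ℕ} (h : t < Fintype.card V) {a : V}
    (hne : (o a : ℕ) ≠ t) : o.symm ⟨t, h⟩ ≠ a := by
  intro heq
  apply hne
  have : o a = ⟨t, h⟩ := by rw [← heq, Equiv.apply_symm_apply]
  rw [this]

lemma pdaStep_zero_of_le {a : V} : ∀ {t}, t ≤ (o a : ℕ) → pdaStep θ s o t a = 0 := by
  intro t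
  induction t with
  | zero => intro _; rfl
  | succ t ih =>
      intro ht
      have h : t < Fintype.card V := Nat.lt_trans (by omega) (o a).isLt
      rw [pdaStep_succ θ s o t h]
      have hne : o.symm ⟨t, h⟩ ≠ a := symm_ne_of_ne o h (by omega)
      by_cases his : o.symm ⟨t, h⟩ = s
      · rw [if_pos his]; exact ih (by omega)
      · rw [if_neg his, Function.update_of_ne (Ne.symm hne)]
        exact ih (by omega)

lemma pdaStep_stable {a : V} : ∀ {t}, (o a : ℕ) < t →
    pdaStep θ s o t a = pdaStep θ s o ((o a : ℕ) + 1) a := by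
  intro t
  induction t with
  | zero => omega
  | succ t ih =>
      intro ht
      rcases eq_or_lt_of_le (Nat.lt_succ_iff.1 ht) with heq | hlt
      · rw [← heq]
      · by_cases h : t < Fintype.card V
        · rw [pdaStep_succ θ s o t h]
          have hne : o.symm ⟨t, h⟩ ≠ a := symm_ne_of_ne o h (by omega)
          by_cases his : o.symm ⟨t, h⟩ = s
          · rw [if_pos his]; exact ih hlt
          · rw [if_neg his, Function.update_of_ne (Ne.symm hne)]
            exact ih hlt
        · rw [pdaStep_succ_ge θ s o t h]; exact ih hlt

lemma pdaStep_s (t : ℕ) : pdaStep θ s o t s = 0 := by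
  induction t with
  | zero => rfl
  | succ t ih =>
      by_cases h : t < Fintype.card V
      · rw [pdaStep_succ θ s o t h]
        by_cases his : o.symm ⟨t, h⟩ = s
        · rw [if_pos his]; exact ih
        · rw [if_neg his, Function.update_of_ne (Ne.symm his)]; exact ih
      · rw [pdaStep_succ_ge θ s o t h]; exact ih

lemma posSet_mono {t t' : ℕ} (h : t ≤ t') :
    {a : V | (o a : ℕ) < t} ⊆ {a : V | (o a : ℕ) < t'} := by
  intro a ha; simp only [Set.mem_setOf_eq] at *; omega

lemma predeq_eq_posSet {t : ℕ} (h : t < Fintype.card V) :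
    predeq o (o.symm ⟨t, h⟩) = {a : V | (o a : ℕ) < t + 1} := by
  ext a
  simp only [predeq, Set.mem_setOf_eq, Equiv.apply_symm_apply, Fin.le_def]
  omega

lemma pdaStep_good (t : ℕ) :
    (∑ j ∈ Finset.univ.erase s, pdaStep θ s o t j) ≤ k ∧
    (∀ j, j ∉ θ.feasible s {a : V | (o a : ℕ) < t} → pdaStep θ s o t j = 0) := by
  induction t with
  | zero =>
      refine ⟨by simp [pdaStep], fun j _ => rfl⟩
  | succ t ih =>
      have hfm : θ.feasible s {a : V | (o a : ℕ) < t}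
          ⊆ θ.feasible s {a : V | (o a : ℕ) < t + 1} :=
        feasible_mono θ s (posSet_mono o (by omega))
      by_cases h : t < Fintype.card V
      · rw [pdaStep_succ θ s o t h]
        set i := o.symm ⟨t, h⟩ with hi
        have hset : predeq o i = {a : V | (o a : ℕ) < t + 1} := predeq_eq_posSet o h
        by_cases his : i = s
        · rw [if_pos his]
          exact ⟨ih.1, fun j hj => ih.2 j (fun hmem => hj (hfm hmem))⟩
        · rw [if_neg his]
          have hmem : pdaStep θ s o t ∈ feasAllocs θ s (predeq o i) (pdaStep θ s o t) := by
            refine ⟨pdaStep_s θ s o t, ih.1, ?_, fun j _ => le_refl _⟩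
            intro j hj
            exact ih.2 j (fun hmem => hj (hset ▸ hfm hmem))
          obtain ⟨hbm, _⟩ := bestAlloc_spec θ s ⟨_, hmem⟩
          set β := bestAlloc θ s (predeq o i) (pdaStep θ s o t) with hβ
          constructor
          · calc ∑ j ∈ Finset.univ.erase s, Function.update (pdaStep θ s o t) i (β i) j
                ≤ ∑ j ∈ Finset.univ.erase s, β j := by
                  refine Finset.sum_le_sum fun j hj => ?_
                  rcases eq_or_ne j i with rfl | hji
                  · rw [Function.update_self]
                  · rw [Function.update_of_ne hji]
                    exact hbm.2.2.2 j (Finset.mem_erase.1 hj).1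
            _ ≤ k := hbm.2.1
          · intro j hj
            rcases eq_or_ne j i with rfl | hji
            · rw [Function.update_self]
              exact hbm.2.2.1 i (hset ▸ hj)
            · rw [Function.update_of_ne hji]
              exact ih.2 j (fun hmem => hj (hfm hmem))
      · rw [pdaStep_succ_ge θ s o t h]
        exact ⟨ih.1, fun j hj => ih.2 j (fun hmem => hj (hfm hmem))⟩

lemma pred_eq_posSet (i : V) : pred o i = {a : V | (o a : ℕ) < (o i : ℕ)} := by
  ext a
  simp only [pred, Set.mem_setOf_eq, Fin.lt_def]

lemma pdaPrior_mem (i : V) :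
    pdaPrior θ s o i ∈ feasAllocs θ s (pred o i) (pdaPrior θ s o i) := by
  have hg := pdaStep_good θ s o (o i : ℕ)
  refine ⟨pdaStep_s θ s o _, hg.1, ?_, fun j _ => le_refl _⟩
  intro j hj
  exact hg.2 j (by rwa [← pred_eq_posSet])

lemma pdaPrior_mem' (i : V) :
    pdaPrior θ s o i ∈ feasAllocs θ s (predeq o i) (pdaPrior θ s o i) := by
  have h := pdaPrior_mem θ s o i
  exact feasAllocs_mono θ s _ (feasible_mono θ s fun a (ha : o a < o i) => le_of_lt ha) h

lemma pdaAlloc_i {i : V} (his : i ≠ s) :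
    pdaAlloc θ s o i = bestAlloc θ s (predeq o i) (pdaPrior θ s o i) i := by
  have h1 : (o i : ℕ) < Fintype.card V := (o i).isLt
  have h2 : pdaAlloc θ s o i = pdaStep θ s o ((o i : ℕ) + 1) i := by
    unfold pdaAlloc
    exact pdaStep_stable θ s o h1
  rw [h2, pdaStep_succ θ s o _ h1]
  have hsymm : o.symm ⟨(o i : ℕ), h1⟩ = i := by
    have : (⟨(o i : ℕ), h1⟩ : Fin (Fintype.card V)) = o i := rfl
    rw [this, Equiv.symm_apply_apply]
  rw [hsymm, if_neg his, Function.update_self]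
  rfl

lemma pdaUtil_formula {i : V} (his : i ≠ s)
    (hne : (∑ j ∈ Finset.univ.erase s, pdaPrior θ s o i j) ≠ k) :
    pdaUtil (θ.val i) θ s o i
      = SWstar θ s (predeq o i) (pdaPrior θ s o i)
        - SWstar θ s (pred o i) (pdaPrior θ s o i) := by
  unfold pdaUtil pdaPay
  rw [if_neg his, if_neg hne]
  ring

lemma pdaUtil_exhaust (hθ : θ.Valid s) {i : V} (his : i ≠ s)
    (heq : (∑ j ∈ Finset.univ.erase s, pdaPrior θ s o i j) = k) :
    pdaUtil (θ.val i) θ s o i = 0 := by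
  unfold pdaUtil pdaPay
  rw [if_neg his, if_pos heq, sub_zero]
  rw [pdaAlloc_i θ s o his]
  obtain ⟨hbm, _⟩ := bestAlloc_spec θ s ⟨_, pdaPrior_mem' θ s o i⟩
  set β := bestAlloc θ s (predeq o i) (pdaPrior θ s o i) with hβ
  have hβi : β i = 0 := by
    have hle : ∀ j ∈ Finset.univ.erase s, pdaPrior θ s o i j ≤ β j :=
      fun j hj => hbm.2.2.2 j (Finset.mem_erase.1 hj).1
    have hpi : pdaPrior θ s o i i = 0 := pdaStep_zero_of_le θ s o (le_refl _)
    by_contra hne0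
    have himem : i ∈ Finset.univ.erase s := Finset.mem_erase.2 ⟨his, Finset.mem_univ _⟩
    have : (∑ j ∈ Finset.univ.erase s, pdaPrior θ s o i j)
        < ∑ j ∈ Finset.univ.erase s, β j :=
      Finset.sum_lt_sum hle ⟨i, himem, by omega⟩
    have := hbm.2.1
    omega
  rw [hβi]
  exact (hθ i his).1

lemma pdaUtil_nonneg (hθ : θ.Valid s) {i : V} (his : i ≠ s) :
    0 ≤ pdaUtil (θ.val i) θ s o i := by
  rcases eq_or_ne (∑ j ∈ Finset.univ.erase s, pdaPrior θ s o i j) k with heq | hne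
  · rw [pdaUtil_exhaust θ s o hθ his heq]
  · rw [pdaUtil_formula θ s o his hne]
    rw [sub_nonneg]
    refine SWstar_le_SWstar θ s ?_ ⟨_, pdaPrior_mem θ s o i⟩
    exact feasAllocs_mono θ s _ (feasible_mono θ s fun a (ha : o a < o i) => le_of_lt ha)

lemma pred_subset_predeq (i : V) : pred o i ⊆ predeq o i :=
  fun a (ha : o a < o i) => le_of_lt ha

lemma pdaUtil_le (hθ : θ.Valid s) {i : V} (his : i ≠ s) :
    pdaUtil (θ.val i) θ s o i
      ≤ SWstar θ s (predeq o i) 0 - SWstar θ s (pred o i) 0 := by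
  have hΔ : 0 ≤ SWstar θ s (predeq o i) 0 - SWstar θ s (pred o i) 0 := by
    rw [sub_nonneg]
    exact SWstar_zero_mono θ s hθ (pred_subset_predeq o i)
  rcases eq_or_ne (∑ j ∈ Finset.univ.erase s, pdaPrior θ s o i j) k with heq | hne
  · rw [pdaUtil_exhaust θ s o hθ his heq]; exact hΔ
  · rw [pdaUtil_formula θ s o his hne]
    have hmem := pdaPrior_mem θ s o i
    exact SWstar_diff_le θ s hθ (pred_subset_predeq o i) hmem.2.1 hmem.1 hmem.2.2.1

lemma pdaUtil_eq_delta (hk : 1 ≤ k) {i : V} (his : i ≠ s)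
    (hprior : ∀ j, pdaPrior θ s o i j = 0) :
    pdaUtil (θ.val i) θ s o i
      = SWstar θ s (predeq o i) 0 - SWstar θ s (pred o i) 0 := by
  have hsum : (∑ j ∈ Finset.univ.erase s, pdaPrior θ s o i j) = 0 :=
    Finset.sum_eq_zero fun j _ => hprior j
  have hzero : pdaPrior θ s o i = (0 : V → ℕ) := funext hprior
  rw [pdaUtil_formula θ s o his (by omega), hzero]

lemma pdaStep_zero_iff (T : ℕ) :
    (∀ j, pdaStep θ s o T j = 0) ↔
    (∀ a, a ≠ s → (o a : ℕ) < T → bestAlloc θ s (predeq o a) 0 a = 0) := by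
  induction T with
  | zero =>
      constructor
      · intro _ a _ h; omega
      · intro _ j; rfl
  | succ T ih =>
      by_cases h : T < Fintype.card V
      · rw [pdaStep_succ θ s o T h]
        set i := o.symm ⟨T, h⟩ with hi
        have hoi : (o i : ℕ) = T := by rw [hi, Equiv.apply_symm_apply]
        by_cases his : i = s
        · rw [if_pos his]
          rw [ih]
          constructor
          · intro hc a ha haT
            rcases Nat.lt_or_ge (o a : ℕ) T with h1 | h1
            · exact hc a ha h1
            · exfalso
              have hoa : (o a : ℕ) = T := by omega
              have hai : a = i := o.injective (Fin.ext (by rw [hoa, hoi]))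
              exact ha (hai.trans his)
          · intro hc a ha haT
            exact hc a ha (by omega)
        · rw [if_neg his]
          constructor
          · intro hz
            have hzT : ∀ j, pdaStep θ s o T j = 0 := by
              intro j
              rcases eq_or_ne j i with rfl | hj
              · exact pdaStep_zero_of_le θ s o (by omega)
              · have := hz j
                rwa [Function.update_of_ne hj] at this
            intro a ha haT
            rcases Nat.lt_or_ge (o a : ℕ) T with h1 | h1
            · exact (ih.1 hzT) a ha h1
            · have haT' : (o a : ℕ) = T := by omega
              have hai : a = i := o.injective (Fin.ext (by rw [haT', hoi]))
              rw [hai]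
              have hz' := hz i
              rw [Function.update_self] at hz'
              have hprior0 : pdaStep θ s o T = (0 : V → ℕ) := funext hzT
              rwa [hprior0] at hz'
          · intro hc j
            have hzT : ∀ j, pdaStep θ s o T j = 0 :=
              ih.2 (fun a ha haT => hc a ha (by omega))
            rcases eq_or_ne j i with rfl | hj
            · rw [Function.update_self]
              have hprior0 : pdaStep θ s o T = (0 : V → ℕ) := funext hzT
              rw [hprior0]
              exact hc i his (by omega)
            · rw [Function.update_of_ne hj]
              exact hzT j
      · rw [pdaStep_succ_ge θ s o T h, ih]
        have hlt : ∀ a : V, (o a : ℕ) < T := fun a => lt_of_lt_of_le (o a).isLt (by omega)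
        constructor
        · intro hc a ha _; exact hc a ha (hlt a)
        · intro hc a ha _; exact hc a ha (by have := hlt a; omega)

end Run
end DA
namespace DA

set_option linter.unusedSectionVars false
set_option linter.unusedVariables false

open scoped Classical

variable {V : Type*} [Fintype V] [DecidableEq V] {k : ℕ}

section Restrict
variable (θ : Profile V k) (s : V) (B : Finset V)

lemma restrict_adj_iff {a b : V} (ha : a ∈ (B : Set V)) (hb : b ∈ (B : Set V)) :
    (θ.restrict ↑B).adj a b ↔ θ.adj a b := by
  unfold Profile.adj Profile.restrict
  simp only [if_pos ha, if_pos hb, Set.mem_inter_iff]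
  constructor
  · rintro (⟨h, _⟩ | ⟨h, _⟩)
    · exact Or.inl h
    · exact Or.inr h
  · rintro (h | h)
    · exact Or.inl ⟨h, hb⟩
    · exact Or.inr ⟨h, ha⟩

lemma restrict_adj_mem {a b : V} (h : (θ.restrict ↑B).adj a b) :
    a ∈ (B : Set V) ∧ b ∈ (B : Set V) := by
  unfold Profile.adj Profile.restrict at h
  simp only at h
  rcases h with h | h
  · by_cases ha : a ∈ (B : Set V)
    · rw [if_pos ha] at h
      exact ⟨ha, h.2⟩
    · rw [if_neg ha] at h
      exact absurd h (Set.notMem_empty _)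
  · by_cases hb : b ∈ (B : Set V)
    · rw [if_pos hb] at h
      exact ⟨h.2, hb⟩
    · rw [if_neg hb] at h
      exact absurd h (Set.notMem_empty _)

lemma restrict_feasible_eq {C : Set V} (hC : C ⊆ ↑B) :
    (θ.restrict ↑B).feasible s C = θ.feasible s C := by
  unfold Profile.feasible
  ext x
  simp only [Set.mem_setOf_eq]
  constructor
  · rintro ⟨h1, h2, h3, h4⟩
    refine ⟨h1, h2, h3, Relation.ReflTransGen.mono ?_ _ _ h4⟩
    rintro a b ⟨hadj, haC, hbC⟩
    exact ⟨(restrict_adj_iff θ B (hC haC) (hC hbC)).1 hadj, haC, hbC⟩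
  · rintro ⟨h1, h2, h3, h4⟩
    refine ⟨h1, h2, h3, Relation.ReflTransGen.mono ?_ _ _ h4⟩
    rintro a b ⟨hadj, haC, hbC⟩
    exact ⟨(restrict_adj_iff θ B (hC haC) (hC hbC)).2 hadj, haC, hbC⟩

lemma restrict_rtg_mem {C : Set V} {x : V}
    (h : Relation.ReflTransGen
      (fun a b => (θ.restrict ↑B).adj a b ∧ a ∈ C ∧ b ∈ C) s x) :
    x = s ∨ x ∈ (B : Set V) := by
  induction h with
  | refl => exact Or.inl rfl
  | tail _ h2 _ => exact Or.inr (restrict_adj_mem θ B h2.1).2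

lemma restrict_feasible_subset {C : Set V} :
    (θ.restrict ↑B).feasible s C ⊆ (B : Set V) := by
  rintro x ⟨h1, h2, h3, h4⟩
  rcases restrict_rtg_mem θ s B h4 with h | h
  · exact absurd h h1
  · exact h

lemma restrict_feasible_empty (hs : s ∉ B) (C : Set V) :
    (θ.restrict ↑B).feasible s C = ∅ := by
  ext x
  simp only [Set.mem_empty_iff_false, iff_false]
  rintro ⟨h1, h2, h3, h4⟩
  have : ∀ y, Relation.ReflTransGen
      (fun a b => (θ.restrict ↑B).adj a b ∧ a ∈ C ∧ b ∈ C) s y → y = s := by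
    intro y hy
    induction hy with
    | refl => rfl
    | tail hp h2 ih =>
        exfalso
        rw [ih] at h2
        exact hs ((restrict_adj_mem θ B h2.1).1)
  exact h1 (this x h4)

lemma restrict_feasible_inter (hs : s ∈ B) (C : Set V) :
    (θ.restrict ↑B).feasible s C = (θ.restrict ↑B).feasible s (C ∩ ↑B) := by
  ext x
  constructor
  · rintro ⟨h1, h2, h3, h4⟩
    have hxB : x ∈ (B : Set V) := by
      rcases restrict_rtg_mem θ s B h4 with h | h
      · exact absurd h h1
      · exact h
    refine ⟨h1, ⟨h2, hxB⟩, ⟨h3, hs⟩, ?_⟩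
    clear h1 h2 hxB
    induction h4 with
    | refl => exact Relation.ReflTransGen.refl
    | tail hp h2 ih =>
        rename_i b c
        have hbc := restrict_adj_mem θ B h2.1
        exact Relation.ReflTransGen.tail ih ⟨h2.1, ⟨h2.2.1, hbc.1⟩, ⟨h2.2.2, hbc.2⟩⟩
  · rintro ⟨h1, h2, h3, h4⟩
    refine ⟨h1, h2.1, h3.1, Relation.ReflTransGen.mono ?_ _ _ h4⟩
    rintro a b ⟨hadj, haC, hbC⟩
    exact ⟨hadj, haC.1, hbC.1⟩

lemma restrict_SW_eq (hθ : θ.Valid s) {π : V → ℕ}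
    (hπ : ∀ j, j ∉ (B : Set V) → π j = 0) :
    SW (θ.restrict ↑B) s π = SW θ s π := by
  unfold SW
  refine Finset.sum_congr rfl fun j hj => ?_
  simp only [Profile.restrict]
  by_cases hjB : j ∈ (B : Set V)
  · rw [if_pos hjB]
  · rw [if_neg hjB, hπ j hjB]
    exact ((hθ j (Finset.mem_erase.1 hj).1).1).symm

lemma feasible_subset_coalition {C : Set V} : θ.feasible s C ⊆ C :=
  fun _ hx => hx.2.1

lemma restrict_feasAllocs_eq {C : Set V} (hC : C ⊆ ↑B) (ρ : V → ℕ) :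
    feasAllocs (θ.restrict ↑B) s C ρ = feasAllocs θ s C ρ := by
  unfold feasAllocs
  rw [restrict_feasible_eq θ s B hC]

lemma restrict_SWstar_eq (hθ : θ.Valid s) {C : Set V} (hC : C ⊆ ↑B) (ρ : V → ℕ) :
    SWstar (θ.restrict ↑B) s C ρ = SWstar θ s C ρ := by
  unfold SWstar
  rw [restrict_feasAllocs_eq θ s B hC]
  congr 1
  refine Set.image_congr fun π hπ => ?_
  refine restrict_SW_eq θ s B hθ fun j hj => ?_
  exact hπ.2.2.1 j fun hmem =>
    hj (hC (feasible_subset_coalition θ s hmem))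

lemma restrict_bestAlloc_eq (hθ : θ.Valid s) {C : Set V} (hC : C ⊆ ↑B) (ρ : V → ℕ) :
    bestAlloc (θ.restrict ↑B) s C ρ = bestAlloc θ s C ρ := by
  unfold bestAlloc
  congr 1
  funext π
  apply propext
  have hmemiff : π ∈ feasAllocs (θ.restrict ↑B) s C ρ ↔ π ∈ feasAllocs θ s C ρ := by
    rw [restrict_feasAllocs_eq θ s B hC]
  constructor
  · rintro ⟨h1, h2⟩
    have h1' := hmemiff.1 h1
    refine ⟨h1', ?_⟩
    rw [← restrict_SW_eq θ s B hθ (π := π) fun j hj =>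
      h1'.2.2.1 j fun hmem => hj (hC (feasible_subset_coalition θ s hmem)),
      ← restrict_SWstar_eq θ s B hθ hC ρ]
    exact h2
  · rintro ⟨h1, h2⟩
    refine ⟨hmemiff.2 h1, ?_⟩
    rw [restrict_SW_eq θ s B hθ (π := π) fun j hj =>
      h1.2.2.1 j fun hmem => hj (hC (feasible_subset_coalition θ s hmem)),
      restrict_SWstar_eq θ s B hθ hC ρ]
    exact h2

lemma restrict_pdaStep_eq (hθ : θ.Valid s) (o : V ≃ Fin (Fintype.card V)) :
    ∀ {t : ℕ}, (∀ a : V, (o a : ℕ) < t → a ∈ (B : Set V)) →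
    pdaStep (θ.restrict ↑B) s o t = pdaStep θ s o t := by
  intro t
  induction t with
  | zero => intro _; rfl
  | succ t ih =>
      intro hpre
      have hpre' : ∀ a : V, (o a : ℕ) < t → a ∈ (B : Set V) :=
        fun a ha => hpre a (by omega)
      by_cases h : t < Fintype.card V
      · rw [pdaStep_succ (θ.restrict ↑B) s o t h, pdaStep_succ θ s o t h, ih hpre']
        by_cases his : o.symm ⟨t, h⟩ = s
        · rw [if_pos his, if_pos his]
        · rw [if_neg his, if_neg his]
          have hsub : predeq o (o.symm ⟨t, h⟩) ⊆ (B : Set V) := by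
            rw [predeq_eq_posSet o h]
            intro a ha
            exact hpre a ha
          rw [restrict_bestAlloc_eq θ s B hθ hsub]
      · rw [pdaStep_succ_ge (θ.restrict ↑B) s o t h, pdaStep_succ_ge θ s o t h,
            ih hpre']

end Restrict
end DA
namespace DA

set_option linter.unusedSectionVars false
set_option linter.unusedVariables false

open scoped Classical

variable {V : Type*} [Fintype V] [DecidableEq V] {k : ℕ}

section Counting

lemma equiv_fin_order_unique {α : Type*} {m : ℕ} (f g : α ≃ Fin m)
    (h : ∀ x y, f x ≤ f y ↔ g x ≤ g y) : f = g := by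
  have hlt : ∀ x y, f x < f y ↔ g x < g y := by
    intro x y
    rw [lt_iff_le_not_ge, lt_iff_le_not_ge, h x y, h y x]
  have hmono : StrictMono (f.symm.trans g) := by
    intro a b hab
    have : f (f.symm a) < f (f.symm b) := by
      rwa [Equiv.apply_symm_apply, Equiv.apply_symm_apply]
    exact (hlt _ _).1 this
  have hid : ⇑(f.symm.trans g) = id := by
    refine (StrictMono.range_inj hmono strictMono_id).1 ?_
    rw [Set.range_id, Set.range_eq_univ]
    exact (f.symm.trans g).surjective
  ext x
  have h2 : g x = f x := by
    have := congrFun hid (f x)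
    simpa using this
  rw [h2]

noncomputable def imgIso (B : Finset V) (o : V ≃ Fin (Fintype.card V)) :
    Fin B.card ≃o {p : Fin (Fintype.card V) // p ∈ B.image o} :=
  (B.image o).orderIsoOfFin (Finset.card_image_of_injective _ o.injective)

lemma mem_img {B : Finset V} (o : V ≃ Fin (Fintype.card V)) {x : V} (hx : x ∈ B) :
    o x ∈ B.image o := Finset.mem_image_of_mem _ hx

noncomputable def relB (B : Finset V) (o : V ≃ Fin (Fintype.card V)) :
    {x // x ∈ B} ≃ Fin B.card where
  toFun x := (imgIso B o).symm ⟨o x, mem_img o x.2⟩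
  invFun j := ⟨o.symm (imgIso B o j), by
    obtain ⟨y, hy, hyo⟩ := Finset.mem_image.1 (imgIso B o j).2
    rw [← hyo, Equiv.symm_apply_apply]
    exact hy⟩
  left_inv x := by
    apply Subtype.ext
    show (o.symm (imgIso B o ((imgIso B o).symm ⟨o x, mem_img o x.2⟩)) : V) = ↑x
    rw [OrderIso.apply_symm_apply]
    exact Equiv.symm_apply_apply o x
  right_inv j := by
    show (imgIso B o).symm ⟨o (o.symm (imgIso B o j)), _⟩ = j
    have h1 : (⟨o (o.symm (imgIso B o j)), mem_img o (by
        obtain ⟨y, hy, hyo⟩ := Finset.mem_image.1 (imgIso B o j).2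
        rw [← hyo, Equiv.symm_apply_apply]; exact hy)⟩ :
        {p : Fin (Fintype.card V) // p ∈ B.image ⇑o}) = imgIso B o j :=
      Subtype.ext (o.apply_symm_apply _)
    rw [h1, OrderIso.symm_apply_apply]

lemma relB_le_iff (B : Finset V) (o : V ≃ Fin (Fintype.card V)) (x y : {x // x ∈ B}) :
    relB B o x ≤ relB B o y ↔ o ↑x ≤ o ↑y := by
  show (imgIso B o).symm _ ≤ (imgIso B o).symm _ ↔ _
  rw [OrderIso.le_iff_le]
  exact Subtype.mk_le_mk

lemma relB_ofSubtype (B : Finset V) (π : Equiv.Perm {x // x ∈ B})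
    (o : V ≃ Fin (Fintype.card V)) :
    relB B ((Equiv.Perm.ofSubtype π).trans o) = π.trans (relB B o) := by
  apply equiv_fin_order_unique
  intro x y
  simp only [Equiv.trans_apply, relB_le_iff]
  rw [Equiv.Perm.ofSubtype_apply_of_mem π x.2, Equiv.Perm.ofSubtype_apply_of_mem π y.2]

variable (θ : Profile V k) (s : V)

def segSet (B : Finset V) (σ : {x // x ∈ B} ≃ Fin B.card) (a : {x // x ∈ B}) : Set V :=
  {x | ∃ h : x ∈ B, σ ⟨x, h⟩ ≤ σ a}

def Rprop (B : Finset V) (σ : {x // x ∈ B} ≃ Fin B.card) : Prop :=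
  ∀ a : {x // x ∈ B}, (a : V) ≠ s →
    bestAlloc (θ.restrict ↑B) s (segSet B σ a) 0 (a : V) = 0

lemma feasAllocs_congr {ψ : Profile V k} {C C' : Set V}
    (h : ψ.feasible s C = ψ.feasible s C') (ρ : V → ℕ) :
    feasAllocs ψ s C ρ = feasAllocs ψ s C' ρ := by
  unfold feasAllocs
  rw [h]

lemma SWstar_congr {ψ : Profile V k} {C C' : Set V}
    (h : ψ.feasible s C = ψ.feasible s C') (ρ : V → ℕ) :
    SWstar ψ s C ρ = SWstar ψ s C' ρ := by
  unfold SWstar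
  rw [feasAllocs_congr s h]

lemma bestAlloc_congr {ψ : Profile V k} {C C' : Set V}
    (h : ψ.feasible s C = ψ.feasible s C') (ρ : V → ℕ) :
    bestAlloc ψ s C ρ = bestAlloc ψ s C' ρ := by
  unfold bestAlloc
  rw [feasAllocs_congr s h, SWstar_congr s h]

lemma bestAlloc_not_feasible {ψ : Profile V k} {C : Set V} {a : V}
    (ha : a ∉ ψ.feasible s C) : bestAlloc ψ s C 0 a = 0 := by
  obtain ⟨hm, _⟩ := bestAlloc_spec ψ s ⟨0, zero_mem_feasAllocs ψ s C⟩
  exact hm.2.2.1 a ha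

lemma restrict_feasible_inter' (B : Finset V) (C : Set V) :
    (θ.restrict ↑B).feasible s C = (θ.restrict ↑B).feasible s (C ∩ ↑B) := by
  by_cases hs : s ∈ B
  · exact restrict_feasible_inter θ s B hs C
  · rw [restrict_feasible_empty θ s B hs, restrict_feasible_empty θ s B hs]

lemma seg_eq (B : Finset V) (o : V ≃ Fin (Fintype.card V)) (a : {x // x ∈ B}) :
    predeq o ↑a ∩ ↑B = segSet B (relB B o) a := by
  ext x
  simp only [predeq, Set.mem_inter_iff, Set.mem_setOf_eq, Finset.mem_coe, segSet]
  constructor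
  · rintro ⟨h1, h2⟩
    exact ⟨h2, (relB_le_iff B o ⟨x, h2⟩ a).2 h1⟩
  · rintro ⟨h, hle⟩
    exact ⟨(relB_le_iff B o ⟨x, h⟩ a).1 hle, h⟩

lemma alloc_zero_iff (B : Finset V) (o : V ≃ Fin (Fintype.card V)) :
    (∀ j, pdaAlloc (θ.restrict ↑B) s o j = 0) ↔ Rprop θ s B (relB B o) := by
  unfold pdaAlloc
  rw [pdaStep_zero_iff]
  constructor
  · intro hc a ha
    have h1 := hc ↑a ha (o ↑a).isLt
    rwa [bestAlloc_congr s (restrict_feasible_inter' θ s B (predeq o ↑a)),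
      seg_eq B o a] at h1
  · intro hR a ha _
    by_cases haB : a ∈ B
    · have := hR ⟨a, haB⟩ ha
      rw [bestAlloc_congr s (restrict_feasible_inter' θ s B (predeq o a))]
      exact seg_eq B o ⟨a, haB⟩ ▸ this
    · apply bestAlloc_not_feasible
      intro hfeas
      exact haB (restrict_feasible_subset θ s B hfeas)

lemma count_C1 (B : Finset V) :
    Fintype.card {o : V ≃ Fin (Fintype.card V) // Rprop θ s B (relB B o)}
        * (B.card).factorial
      ≤ (Fintype.card V).factorial
        * Fintype.card {σ : {x // x ∈ B} ≃ Fin B.card // Rprop θ s B σ} := by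
  have hinj : Function.Injective
      (fun p : {o : V ≃ Fin (Fintype.card V) // Rprop θ s B (relB B o)}
          × Equiv.Perm {x // x ∈ B} =>
        (((Equiv.Perm.ofSubtype p.2).trans p.1.1 : V ≃ Fin (Fintype.card V)),
          (⟨relB B p.1.1, p.1.2⟩ :
            {σ : {x // x ∈ B} ≃ Fin B.card // Rprop θ s B σ}))) := by
    rintro ⟨⟨o1, h1⟩, π1⟩ ⟨⟨o2, h2⟩, π2⟩ heq
    simp only [Prod.mk.injEq, Subtype.mk.injEq] at heq
    obtain ⟨hA, hσ⟩ := heq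
    have hrw1 := relB_ofSubtype B π1 o1
    have hrw2 := relB_ofSubtype B π2 o2
    rw [hA, hrw2] at hrw1
    rw [hσ] at hrw1
    have hπ : π1 = π2 := by
      ext x
      have h3 : (relB B o2) (π2 x) = (relB B o2) (π1 x) := by
        have := congrArg (fun e : {x // x ∈ B} ≃ Fin B.card => e x) hrw1
        simpa using this
      have := (relB B o2).injective h3
      rw [this]
    have ho : o1 = o2 := by
      rw [hπ] at hA
      ext y
      have h5 : o1 y = o2 y := by
        have := congrArg (fun e : V ≃ Fin (Fintype.card V) =>
          e ((Equiv.Perm.ofSubtype π2).symm y)) hA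
        simpa using this
      rw [h5]
    simp only [Prod.mk.injEq, Subtype.mk.injEq]
    exact ⟨ho, hπ⟩
  have hcard := Fintype.card_le_of_injective _ hinj
  rw [Fintype.card_prod, Fintype.card_prod, Fintype.card_perm, Fintype.card_coe,
    Fintype.card_equiv (Fintype.equivFin V)] at hcard
  exact hcard

section MkOrder
variable (B : Finset V) (i : V)

lemma card_split (hiB : i ∉ B) :
    B.card + 1 + (Finset.univ \ insert i B).card = Fintype.card V := by
  have h1 : (insert i B).card = B.card + 1 := Finset.card_insert_of_notMem hiB
  have h2 : (Finset.univ \ insert i B).card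
      = Fintype.card V - (insert i B).card := by
    rw [Finset.card_sdiff_of_subset (Finset.subset_univ _), Finset.card_univ]
  have h3 : (insert i B).card ≤ Fintype.card V := by
    rw [← Finset.card_univ]
    exact Finset.card_le_card (Finset.subset_univ _)
  omega

noncomputable def mkFun (hiB : i ∉ B)
    (σ : {x // x ∈ B} ≃ Fin B.card)
    (τ : {x // x ∈ Finset.univ \ insert i B} ≃ Fin (Finset.univ \ insert i B).card)
    (x : V) : Fin (Fintype.card V) :=
  if hx : x ∈ B then
    ⟨σ ⟨x, hx⟩, by have := (σ ⟨x, hx⟩).isLt; have := card_split B i hiB; omega⟩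
  else if hxi : x = i then
    ⟨B.card, by have := card_split B i hiB; omega⟩
  else
    ⟨B.card + 1 + τ ⟨x, Finset.mem_sdiff.2 ⟨Finset.mem_univ _, by
        simp [Finset.mem_insert, hx, hxi]⟩⟩, by
      have h1 := (τ ⟨x, Finset.mem_sdiff.2 ⟨Finset.mem_univ _, by
        simp [Finset.mem_insert, hx, hxi]⟩⟩).isLt
      have h2 := card_split B i hiB
      omega⟩

lemma mkFun_B (hiB : i ∉ B) (σ) (τ) {x : V} (hx : x ∈ B) :
    (mkFun B i hiB σ τ x : ℕ) = σ ⟨x, hx⟩ := by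
  unfold mkFun
  rw [dif_pos hx]

lemma mkFun_i (hiB : i ∉ B) (σ) (τ) :
    (mkFun B i hiB σ τ i : ℕ) = B.card := by
  unfold mkFun
  rw [dif_neg hiB, dif_pos rfl]

lemma mkFun_rest (hiB : i ∉ B) (σ) (τ) {x : V} (hx : x ∉ B) (hxi : x ≠ i) :
    ∃ hm : x ∈ Finset.univ \ insert i B,
      (mkFun B i hiB σ τ x : ℕ) = B.card + 1 + τ ⟨x, hm⟩ := by
  refine ⟨Finset.mem_sdiff.2 ⟨Finset.mem_univ _, by
    simp [Finset.mem_insert, hx, hxi]⟩, ?_⟩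
  unfold mkFun
  rw [dif_neg hx, dif_neg hxi]

lemma mkFun_injective (hiB : i ∉ B) (σ) (τ) :
    Function.Injective (mkFun B i hiB σ τ) := by
  intro x y hxy
  have hv := congrArg Fin.val hxy
  by_cases hx : x ∈ B <;> by_cases hy : y ∈ B
  · rw [mkFun_B B i hiB σ τ hx, mkFun_B B i hiB σ τ hy] at hv
    have := σ.injective (Fin.ext hv)
    exact congrArg Subtype.val this
  · exfalso
    rw [mkFun_B B i hiB σ τ hx] at hv
    have h1 := (σ ⟨x, hx⟩).isLt
    by_cases hyi : y = i
    · rw [hyi, mkFun_i B i hiB σ τ] at hv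
      omega
    · obtain ⟨hm, he⟩ := mkFun_rest B i hiB σ τ hy hyi
      rw [he] at hv
      omega
  · exfalso
    rw [mkFun_B B i hiB σ τ hy] at hv
    have h1 := (σ ⟨y, hy⟩).isLt
    by_cases hxi : x = i
    · rw [hxi, mkFun_i B i hiB σ τ] at hv
      omega
    · obtain ⟨hm, he⟩ := mkFun_rest B i hiB σ τ hx hxi
      rw [he] at hv
      omega
  · by_cases hxi : x = i <;> by_cases hyi : y = i
    · rw [hxi, hyi]
    · exfalso
      obtain ⟨hm, he⟩ := mkFun_rest B i hiB σ τ hy hyi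
      rw [hxi, mkFun_i B i hiB σ τ, he] at hv
      omega
    · exfalso
      obtain ⟨hm, he⟩ := mkFun_rest B i hiB σ τ hx hxi
      rw [hyi, mkFun_i B i hiB σ τ, he] at hv
      omega
    · obtain ⟨hmx, hex⟩ := mkFun_rest B i hiB σ τ hx hxi
      obtain ⟨hmy, hey⟩ := mkFun_rest B i hiB σ τ hy hyi
      rw [hex, hey] at hv
      have : τ ⟨x, hmx⟩ = τ ⟨y, hmy⟩ := Fin.ext (by omega)
      have := τ.injective this
      exact congrArg Subtype.val this

noncomputable def mkOrder (hiB : i ∉ B)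
    (σ : {x // x ∈ B} ≃ Fin B.card)
    (τ : {x // x ∈ Finset.univ \ insert i B} ≃ Fin (Finset.univ \ insert i B).card) :
    V ≃ Fin (Fintype.card V) :=
  Equiv.ofBijective (mkFun B i hiB σ τ)
    ((Fintype.bijective_iff_injective_and_card _).2
      ⟨mkFun_injective B i hiB σ τ, by simp⟩)

lemma mkOrder_apply (hiB : i ∉ B) (σ) (τ) (x : V) :
    mkOrder B i hiB σ τ x = mkFun B i hiB σ τ x := rfl

lemma mkOrder_lt_iff (hiB : i ∉ B) (σ) (τ) (x : V) :
    ((mkOrder B i hiB σ τ x : ℕ) < B.card ↔ x ∈ B) := by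
  constructor
  · intro h
    by_contra hx
    by_cases hxi : x = i
    · rw [mkOrder_apply, hxi, mkFun_i B i hiB σ τ] at h
      omega
    · obtain ⟨hm, he⟩ := mkFun_rest B i hiB σ τ hx hxi
      rw [mkOrder_apply, he] at h
      omega
  · intro hx
    rw [mkOrder_apply, mkFun_B B i hiB σ τ hx]
    exact (σ ⟨x, hx⟩).isLt

lemma mkOrder_fiber (hiB : i ∉ B) (σ) (τ) :
    (Finset.univ.filter fun j => mkOrder B i hiB σ τ j < mkOrder B i hiB σ τ i) = B := by
  ext x
  rw [Finset.mem_filter]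
  have hoi : (mkOrder B i hiB σ τ i : ℕ) = B.card := mkFun_i B i hiB σ τ
  constructor
  · rintro ⟨_, hlt⟩
    rw [Fin.lt_def, hoi] at hlt
    exact (mkOrder_lt_iff B i hiB σ τ x).1 hlt
  · intro hx
    refine ⟨Finset.mem_univ _, ?_⟩
    rw [Fin.lt_def, hoi]
    exact (mkOrder_lt_iff B i hiB σ τ x).2 hx

end MkOrder

end Counting
end DA
namespace DA

set_option linter.unusedSectionVars false
set_option linter.unusedVariables false

open scoped Classical

variable {V : Type*} [Fintype V] [DecidableEq V] {k : ℕ}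

section Counting2
variable (θ : Profile V k) (s : V)

lemma mkOrder_prior_zero {B : Finset V} {i : V} (hθ : θ.Valid s) (hiB : i ∉ B)
    (σ : {x // x ∈ B} ≃ Fin B.card) (hσ : Rprop θ s B σ)
    (τ : {x // x ∈ Finset.univ \ insert i B} ≃ Fin (Finset.univ \ insert i B).card) :
    ∀ j, pdaPrior θ s (mkOrder B i hiB σ τ) i j = 0 := by
  set o := mkOrder B i hiB σ τ with ho
  have hlt : ∀ x, ((o x : ℕ) < B.card ↔ x ∈ B) :=
    fun x => mkOrder_lt_iff B i hiB σ τ x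
  have hvB : ∀ (x : V) (hx : x ∈ B), (o x : ℕ) = σ ⟨x, hx⟩ :=
    fun x hx => mkFun_B B i hiB σ τ hx
  show ∀ j, pdaStep θ s o (↑(o i)) j = 0
  rw [pdaStep_zero_iff]
  intro a ha halt
  have hoi : (o i : ℕ) = B.card := mkFun_i B i hiB σ τ
  have haB : a ∈ B := (hlt a).1 (by omega)
  have hsub : predeq o a ⊆ (↑B : Set V) := by
    intro x hx
    have hxa : o x ≤ o a := hx
    have h2 := Fin.le_def.1 hxa
    have h1 : (o a : ℕ) < B.card := by omega
    exact (hlt x).1 (by omega)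
  rw [← restrict_bestAlloc_eq θ s B hθ hsub,
      bestAlloc_congr s (restrict_feasible_inter' θ s B (predeq o a))]
  have hseg : predeq o a ∩ ↑B = segSet B σ ⟨a, haB⟩ := by
    ext x
    simp only [predeq, Set.mem_inter_iff, Set.mem_setOf_eq, Finset.mem_coe, segSet]
    have hv2 : (o a : ℕ) = σ ⟨a, haB⟩ := hvB a haB
    constructor
    · rintro ⟨h1, h2⟩
      refine ⟨h2, ?_⟩
      have hv1 : (o x : ℕ) = σ ⟨x, h2⟩ := hvB x h2
      rw [Fin.le_def]
      have := Fin.le_def.1 h1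
      omega
    · rintro ⟨h, hle⟩
      refine ⟨?_, h⟩
      have hv1 : (o x : ℕ) = σ ⟨x, h⟩ := hvB x h
      rw [Fin.le_def]
      have := Fin.le_def.1 hle
      omega
  rw [hseg]
  exact hσ ⟨a, haB⟩ ha

lemma count_C2 {B : Finset V} {i : V} (hθ : θ.Valid s) (hiB : i ∉ B) :
    Fintype.card {σ : {x // x ∈ B} ≃ Fin B.card // Rprop θ s B σ}
        * (Finset.univ \ insert i B).card.factorial
      ≤ Fintype.card {o : V ≃ Fin (Fintype.card V) //
          (Finset.univ.filter fun j => o j < o i) = B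
          ∧ ∀ j, pdaPrior θ s o i j = 0} := by
  have hinj : Function.Injective
      (fun p : {σ : {x // x ∈ B} ≃ Fin B.card // Rprop θ s B σ}
          × ({x // x ∈ Finset.univ \ insert i B}
              ≃ Fin (Finset.univ \ insert i B).card) =>
        (⟨mkOrder B i hiB p.1.1 p.2,
          mkOrder_fiber B i hiB p.1.1 p.2,
          mkOrder_prior_zero θ s hθ hiB p.1.1 p.1.2 p.2⟩ :
          {o : V ≃ Fin (Fintype.card V) //
            (Finset.univ.filter fun j => o j < o i) = B
            ∧ ∀ j, pdaPrior θ s o i j = 0})) := by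
    rintro ⟨⟨σ1, hσ1⟩, τ1⟩ ⟨⟨σ2, hσ2⟩, τ2⟩ heq
    simp only [Subtype.mk.injEq] at heq
    have hσ : σ1 = σ2 := by
      ext x
      have h1 := congrArg (fun e : V ≃ Fin (Fintype.card V) => (e ↑x : ℕ)) heq
      rw [mkOrder_apply, mkOrder_apply, mkFun_B B i hiB σ1 τ1 x.2,
        mkFun_B B i hiB σ2 τ2 x.2] at h1
      exact h1
    have hτ : τ1 = τ2 := by
      ext x
      have hxB : (x : V) ∉ B := by
        have := (Finset.mem_sdiff.1 x.2).2
        simp only [Finset.mem_insert, not_or] at this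
        exact this.2
      have hxi : (x : V) ≠ i := by
        have := (Finset.mem_sdiff.1 x.2).2
        simp only [Finset.mem_insert, not_or] at this
        exact this.1
      have h1 := congrArg (fun e : V ≃ Fin (Fintype.card V) => (e ↑x : ℕ)) heq
      obtain ⟨hm1, he1⟩ := mkFun_rest B i hiB σ1 τ1 hxB hxi
      obtain ⟨hm2, he2⟩ := mkFun_rest B i hiB σ2 τ2 hxB hxi
      rw [mkOrder_apply, mkOrder_apply, he1, he2] at h1
      have h2 : τ1 ⟨↑x, hm1⟩ = τ2 ⟨↑x, hm2⟩ := Fin.ext (by omega)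
      exact congrArg Fin.val h2
    simp only [Prod.mk.injEq, Subtype.mk.injEq]
    exact ⟨hσ, hτ⟩
  have hcard := Fintype.card_le_of_injective _ hinj
  rwa [Fintype.card_prod,
    Fintype.card_equiv (Fintype.equivFinOfCardEq (Fintype.card_coe _)),
    Fintype.card_coe] at hcard

noncomputable def fiberEquivB (B : Finset V) (o : V ≃ Fin (Fintype.card V))
    (hb : B.card ≤ Fintype.card V)
    (h : ∀ x, ((o x : ℕ) < B.card ↔ x ∈ B)) : {x // x ∈ B} ≃ Fin B.card where
  toFun x := ⟨o ↑x, (h ↑x).2 x.2⟩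
  invFun j := ⟨o.symm ⟨(j : ℕ), lt_of_lt_of_le j.isLt hb⟩, (h _).1 (by
    rw [Equiv.apply_symm_apply]
    exact j.isLt)⟩
  left_inv x := by
    apply Subtype.ext
    show (o.symm ⟨((⟨(o ↑x : ℕ), _⟩ : Fin B.card) : ℕ), _⟩ : V) = ↑x
    have h1 : (⟨((⟨(o ↑x : ℕ), (h ↑x).2 x.2⟩ : Fin B.card) : ℕ),
        lt_of_lt_of_le (⟨(o ↑x : ℕ), (h ↑x).2 x.2⟩ : Fin B.card).isLt hb⟩ :
        Fin (Fintype.card V)) = o ↑x := Fin.ext rfl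
    rw [h1, Equiv.symm_apply_apply]
  right_inv j := by
    apply Fin.ext
    show (o (o.symm ⟨(j : ℕ), _⟩) : ℕ) = (j : ℕ)
    rw [Equiv.apply_symm_apply]
  
lemma relB_eq_fiberEquivB (B : Finset V) (o : V ≃ Fin (Fintype.card V))
    (hb : B.card ≤ Fintype.card V) (h : ∀ x, ((o x : ℕ) < B.card ↔ x ∈ B)) :
    relB B o = fiberEquivB B o hb h := by
  apply equiv_fin_order_unique
  intro x y
  rw [relB_le_iff]
  show o ↑x ≤ o ↑y ↔ (⟨(o ↑x : ℕ), _⟩ : Fin B.card) ≤ ⟨(o ↑y : ℕ), _⟩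
  rw [Fin.le_def, Fin.le_def, Fin.val_mk, Fin.val_mk]

noncomputable def fiberEquivRest (R : Finset V) (o : V ≃ Fin (Fintype.card V))
    (c : ℕ) (h : ∀ x, (c < (o x : ℕ) ↔ x ∈ R))
    (hcard : c + 1 + R.card = Fintype.card V) : {x // x ∈ R} ≃ Fin R.card where
  toFun x := ⟨(o ↑x : ℕ) - (c + 1), by
    have h1 := (o ↑x).isLt
    have h2 := (h ↑x).2 x.2
    omega⟩
  invFun j := ⟨o.symm ⟨c + 1 + (j : ℕ), by have := j.isLt; omega⟩, (h _).1 (by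
    rw [Equiv.apply_symm_apply]
    show c < c + 1 + (j : ℕ)
    omega)⟩
  left_inv x := by
    apply Subtype.ext
    show (o.symm ⟨c + 1 + ((o ↑x : ℕ) - (c + 1)), _⟩ : V) = ↑x
    have h2 := (h ↑x).2 x.2
    have h1 : (⟨c + 1 + ((o ↑x : ℕ) - (c + 1)), by
        have := (o ↑x).isLt; omega⟩ : Fin (Fintype.card V)) = o ↑x := by
      apply Fin.ext
      rw [Fin.val_mk]
      omega
    rw [h1, Equiv.symm_apply_apply]
  right_inv j := by
    apply Fin.ext
    show (o (o.symm ⟨c + 1 + (j : ℕ), _⟩) : ℕ) - (c + 1) = (j : ℕ)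
    rw [Equiv.apply_symm_apply]
    show c + 1 + (j : ℕ) - (c + 1) = (j : ℕ)
    omega

lemma relB_eq_fiberEquivRest (R : Finset V) (o : V ≃ Fin (Fintype.card V))
    (c : ℕ) (h : ∀ x, (c < (o x : ℕ) ↔ x ∈ R))
    (hcard : c + 1 + R.card = Fintype.card V) :
    relB R o = fiberEquivRest R o c h hcard := by
  apply equiv_fin_order_unique
  intro x y
  rw [relB_le_iff]
  show o ↑x ≤ o ↑y ↔ (⟨(o ↑x : ℕ) - (c+1), _⟩ : Fin R.card) ≤ ⟨(o ↑y : ℕ) - (c+1), _⟩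
  rw [Fin.le_def, Fin.le_def]
  have hx := (h ↑x).2 x.2
  have hy := (h ↑y).2 y.2
  show ((o ↑x : ℕ) ≤ (o ↑y : ℕ)) ↔ ((o ↑x : ℕ) - (c+1) ≤ (o ↑y : ℕ) - (c+1))
  omega

lemma fiber_oi {B : Finset V} {i : V} (o : V ≃ Fin (Fintype.card V))
    (hfib : (Finset.univ.filter fun j => o j < o i) = B) :
    (o i : ℕ) = B.card := by
  have himg : B.image o = Finset.Iio (o i) := by
    ext p
    simp only [Finset.mem_image, Finset.mem_Iio]
    constructor
    · rintro ⟨x, hx, rfl⟩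
      have hx' : x ∈ Finset.univ.filter fun j => o j < o i := hfib ▸ hx
      exact (Finset.mem_filter.1 hx').2
    · intro hp
      refine ⟨o.symm p, ?_, o.apply_symm_apply p⟩
      rw [← hfib]
      refine Finset.mem_filter.2 ⟨Finset.mem_univ _, ?_⟩
      rwa [o.apply_symm_apply]
  have h2 := congrArg Finset.card himg
  rw [Finset.card_image_of_injective _ o.injective, Fin.card_Iio] at h2
  omega

lemma count_fiber {B : Finset V} {i : V} (hiB : i ∉ B) :
    Fintype.card {o : V ≃ Fin (Fintype.card V) //
        (Finset.univ.filter fun j => o j < o i) = B}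
      ≤ B.card.factorial * (Finset.univ \ insert i B).card.factorial := by
  classical
  set R := Finset.univ \ insert i B with hR
  have hsplit : B.card + 1 + R.card = Fintype.card V := card_split B i hiB
  have hinj : Function.Injective
      (fun p : {o : V ≃ Fin (Fintype.card V) //
          (Finset.univ.filter fun j => o j < o i) = B} =>
        ((relB B p.1, relB R p.1) :
          ({x // x ∈ B} ≃ Fin B.card) × ({x // x ∈ R} ≃ Fin R.card))) := by
    rintro ⟨o1, hf1⟩ ⟨o2, hf2⟩ heq
    simp only [Prod.mk.injEq] at heq
    obtain ⟨hB, hRe⟩ := heq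
    have hoi1 : (o1 i : ℕ) = B.card := fiber_oi o1 hf1
    have hoi2 : (o2 i : ℕ) = B.card := fiber_oi o2 hf2
    have hmem1 : ∀ x, ((o1 x : ℕ) < B.card ↔ x ∈ B) := by
      intro x
      constructor
      · intro hltx
        have hx : x ∈ Finset.univ.filter (fun j => o1 j < o1 i) :=
          Finset.mem_filter.2 ⟨Finset.mem_univ _, by rw [Fin.lt_def, hoi1]; exact hltx⟩
        rwa [hf1] at hx
      · intro hxB
        have hx : x ∈ Finset.univ.filter (fun j => o1 j < o1 i) := by
          rw [hf1]; exact hxB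
        have := (Finset.mem_filter.1 hx).2
        rwa [Fin.lt_def, hoi1] at this
    have hmem2 : ∀ x, ((o2 x : ℕ) < B.card ↔ x ∈ B) := by
      intro x
      constructor
      · intro hltx
        have hx : x ∈ Finset.univ.filter (fun j => o2 j < o2 i) :=
          Finset.mem_filter.2 ⟨Finset.mem_univ _, by rw [Fin.lt_def, hoi2]; exact hltx⟩
        rwa [hf2] at hx
      · intro hxB
        have hx : x ∈ Finset.univ.filter (fun j => o2 j < o2 i) := by
          rw [hf2]; exact hxB
        have := (Finset.mem_filter.1 hx).2
        rwa [Fin.lt_def, hoi2] at this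
    have hrest1 : ∀ x, (B.card < (o1 x : ℕ) ↔ x ∈ R) := by
      intro x
      rw [hR]
      simp only [Finset.mem_sdiff, Finset.mem_univ, true_and, Finset.mem_insert, not_or]
      constructor
      · intro hgt
        refine ⟨?_, fun hxB => by have := (hmem1 x).2 hxB; omega⟩
        intro hxi
        rw [hxi] at hgt
        omega
      · rintro ⟨hxi, hxB⟩
        have h1 : ¬ (o1 x : ℕ) < B.card := fun hlt => hxB ((hmem1 x).1 hlt)
        have h2 : (o1 x : ℕ) ≠ B.card := by
          intro he
          apply hxi
          apply o1.injective
          exact Fin.ext (by rw [he, hoi1])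
        omega
    have hrest2 : ∀ x, (B.card < (o2 x : ℕ) ↔ x ∈ R) := by
      intro x
      rw [hR]
      simp only [Finset.mem_sdiff, Finset.mem_univ, true_and, Finset.mem_insert, not_or]
      constructor
      · intro hgt
        refine ⟨?_, fun hxB => by have := (hmem2 x).2 hxB; omega⟩
        intro hxi
        rw [hxi] at hgt
        omega
      · rintro ⟨hxi, hxB⟩
        have h1 : ¬ (o2 x : ℕ) < B.card := fun hlt => hxB ((hmem2 x).1 hlt)
        have h2 : (o2 x : ℕ) ≠ B.card := by
          intro he
          apply hxi
          apply o2.injective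
          exact Fin.ext (by rw [he, hoi2])
        omega
    have hbn : B.card ≤ Fintype.card V := by omega
    have hfe1 := relB_eq_fiberEquivB B o1 hbn hmem1
    have hfe2 := relB_eq_fiberEquivB B o2 hbn hmem2
    have hge1 := relB_eq_fiberEquivRest R o1 B.card hrest1 hsplit
    have hge2 := relB_eq_fiberEquivRest R o2 B.card hrest2 hsplit
    have hoeq : o1 = o2 := by
      apply Equiv.ext
      intro x
      by_cases hxB : x ∈ B
      · have h3 : fiberEquivB B o1 hbn hmem1 ⟨x, hxB⟩
            = fiberEquivB B o2 hbn hmem2 ⟨x, hxB⟩ := by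
          rw [← hfe1, ← hfe2, hB]
        have h4' := congrArg Fin.val h3
        have h4 : (o1 x : ℕ) = (o2 x : ℕ) := h4'
        exact Fin.ext h4
      by_cases hxi : x = i
      · subst hxi
        exact Fin.ext (by rw [hoi1, hoi2])
      · have hxR : x ∈ R := by
          rw [hR]
          simp only [Finset.mem_sdiff, Finset.mem_univ, true_and,
            Finset.mem_insert, not_or]
          exact ⟨hxi, hxB⟩
        have h3 : fiberEquivRest R o1 B.card hrest1 hsplit ⟨x, hxR⟩
            = fiberEquivRest R o2 B.card hrest2 hsplit ⟨x, hxR⟩ := by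
          rw [← hge1, ← hge2, hRe]
        have h4' := congrArg Fin.val h3
        have h4 : (o1 x : ℕ) - (B.card + 1) = (o2 x : ℕ) - (B.card + 1) := h4'
        have h5 := (hrest1 x).2 hxR
        have h6 := (hrest2 x).2 hxR
        exact Fin.ext (by omega)
    exact Subtype.ext hoeq
  have hcard := Fintype.card_le_of_injective _ hinj
  rwa [Fintype.card_prod,
    Fintype.card_equiv (Fintype.equivFinOfCardEq (Fintype.card_coe _)),
    Fintype.card_equiv (Fintype.equivFinOfCardEq (Fintype.card_coe _)),
    Fintype.card_coe, Fintype.card_coe] at hcard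

lemma count_main {B : Finset V} {i : V} (hθ : θ.Valid s) (hiB : i ∉ B) :
    (B.card.factorial * (Finset.univ \ insert i B).card.factorial) *
      Fintype.card {o : V ≃ Fin (Fintype.card V) //
        ∀ j, pdaAlloc (θ.restrict ↑B) s o j = 0}
    ≤ (Fintype.card V).factorial *
      Fintype.card {o : V ≃ Fin (Fintype.card V) //
        (Finset.univ.filter fun j => o j < o i) = B
        ∧ ∀ j, pdaPrior θ s o i j = 0} := by
  have hZ : Fintype.card {o : V ≃ Fin (Fintype.card V) //
        ∀ j, pdaAlloc (θ.restrict ↑B) s o j = 0}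
      = Fintype.card {o : V ≃ Fin (Fintype.card V) // Rprop θ s B (relB B o)} :=
    Fintype.card_congr (Equiv.subtypeEquivRight fun o => by
      rw [alloc_zero_iff θ s B o])
  rw [hZ]
  have h1 := count_C1 θ s B
  have h2 := count_C2 θ s hθ hiB
  calc (B.card.factorial * (Finset.univ \ insert i B).card.factorial) *
        Fintype.card {o : V ≃ Fin (Fintype.card V) // Rprop θ s B (relB B o)}
      = (Fintype.card {o : V ≃ Fin (Fintype.card V) // Rprop θ s B (relB B o)}
          * B.card.factorial) * (Finset.univ \ insert i B).card.factorial := by ring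
    _ ≤ ((Fintype.card V).factorial
          * Fintype.card {σ : {x // x ∈ B} ≃ Fin B.card // Rprop θ s B σ})
          * (Finset.univ \ insert i B).card.factorial :=
        Nat.mul_le_mul_right _ h1
    _ = (Fintype.card V).factorial
          * (Fintype.card {σ : {x // x ∈ B} ≃ Fin B.card // Rprop θ s B σ}
            * (Finset.univ \ insert i B).card.factorial) := by ring
    _ ≤ _ := Nat.mul_le_mul_left _ h2

end Counting2
end DA
namespace DA

set_option linter.unusedSectionVars false
set_option linter.unusedVariables false

open scoped Classical

variable {V : Type*} [Fintype V] [DecidableEq V] {k : ℕ}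

section Assembly
variable (θ : Profile V k) (s : V)

lemma pred_set_of_fiber {i : V} {B : Finset V} (o : V ≃ Fin (Fintype.card V))
    (hB : (Finset.univ.filter fun j => o j < o i) = B) : pred o i = ↑B := by
  ext x
  simp only [pred, Set.mem_setOf_eq, ← hB, Finset.coe_filter, Finset.mem_univ, true_and]

lemma predeq_set_of_fiber {i : V} {B : Finset V} (o : V ≃ Fin (Fintype.card V))
    (hB : (Finset.univ.filter fun j => o j < o i) = B) :
    predeq o i = ↑(insert i B) := by
  ext x
  simp only [predeq, Set.mem_setOf_eq, Finset.coe_insert, Set.mem_insert_iff,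
    Finset.mem_coe, ← hB, Finset.mem_filter, Finset.mem_univ, true_and]
  constructor
  · intro hle
    rcases lt_or_eq_of_le hle with hlt | heq
    · exact Or.inr hlt
    · exact Or.inl (o.injective heq)
  · rintro (rfl | hlt)
    · exact le_refl _
    · exact le_of_lt hlt

lemma per_fiber_lower (hθ : θ.Valid s) (hk : 1 ≤ k) {i : V} (hi : i ≠ s)
    {B : Finset V} (hiB : i ∉ B) :
    ((B.card.factorial * (Fintype.card V - B.card - 1).factorial : ℝ) /
        ((Fintype.card V).factorial : ℝ)) *
      mu (θ.restrict ↑B) s *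
      (SWstar θ s (↑(insert i B)) 0 - SWstar θ s (↑B) 0)
    ≤ (∑ o ∈ Finset.univ.filter
          (fun o : V ≃ Fin (Fintype.card V) =>
            (Finset.univ.filter fun j => o j < o i) = B),
        pdaUtil (θ.val i) θ s o i) / ((Fintype.card V).factorial : ℝ) := by
  set nf : ℝ := ((Fintype.card V).factorial : ℝ) with hnf
  have hnf0 : (0 : ℝ) < nf := by
    rw [hnf]
    exact_mod_cast Nat.factorial_pos _
  set Δ : ℝ := SWstar θ s (↑(insert i B)) 0 - SWstar θ s (↑B) 0 with hΔ
  have hΔ0 : 0 ≤ Δ := by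
    rw [hΔ, sub_nonneg]
    exact SWstar_zero_mono θ s hθ (Finset.coe_subset.2 (Finset.subset_insert i B))
  set F := Finset.univ.filter
      (fun o : V ≃ Fin (Fintype.card V) =>
        (Finset.univ.filter fun j => o j < o i) = B) with hF
  set NzS := F.filter (fun o => ∀ j, pdaPrior θ s o i j = 0) with hNzS
  have hNzcard : NzS.card = Fintype.card {o : V ≃ Fin (Fintype.card V) //
      (Finset.univ.filter fun j => o j < o i) = B
      ∧ ∀ j, pdaPrior θ s o i j = 0} := by
    rw [Fintype.card_subtype, hNzS, hF, Finset.filter_filter]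
  -- each order in NzS has utility exactly Δ
  have hub : ∀ o ∈ NzS, pdaUtil (θ.val i) θ s o i = Δ := by
    intro o ho
    rw [hNzS, Finset.mem_filter] at ho
    obtain ⟨hoF, hprior⟩ := ho
    rw [hF, Finset.mem_filter] at hoF
    rw [pdaUtil_eq_delta θ s o hk hi hprior, hΔ,
      predeq_set_of_fiber o hoF.2, pred_set_of_fiber o hoF.2]
  have hsumNz : ∑ o ∈ NzS, pdaUtil (θ.val i) θ s o i = (NzS.card : ℝ) * Δ := by
    rw [Finset.sum_congr rfl hub, Finset.sum_const, nsmul_eq_mul]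
  have hmono : ∑ o ∈ NzS, pdaUtil (θ.val i) θ s o i
      ≤ ∑ o ∈ F, pdaUtil (θ.val i) θ s o i := by
    refine Finset.sum_le_sum_of_subset_of_nonneg (Finset.filter_subset _ _) ?_
    intro o _ _
    exact pdaUtil_nonneg θ s o hθ hi
  -- the counting inequality
  have hcm := count_main θ s hθ hiB (i := i)
  have hd : (Finset.univ \ insert i B).card = Fintype.card V - B.card - 1 := by
    have := card_split B i hiB
    omega
  rw [hd] at hcm
  have hmu : mu (θ.restrict ↑B) s
      = (Fintype.card {o : V ≃ Fin (Fintype.card V) //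
          ∀ j, pdaAlloc (θ.restrict ↑B) s o j = 0} : ℝ) / nf := by
    rw [mu, Nat.card_eq_fintype_card, hnf]
  set Z : ℝ := (Fintype.card {o : V ≃ Fin (Fintype.card V) //
      ∀ j, pdaAlloc (θ.restrict ↑B) s o j = 0} : ℝ) with hZdef
  set Nz : ℝ := (NzS.card : ℝ) with hNzdef
  have hcast : ((B.card.factorial : ℝ) * ((Fintype.card V - B.card - 1).factorial : ℝ)) * Z
      ≤ nf * Nz := by
    rw [hZdef, hNzdef, hNzcard, hnf]
    exact_mod_cast hcm
  have hS : Nz * Δ ≤ ∑ o ∈ F, pdaUtil (θ.val i) θ s o i := by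
    rw [hNzdef, ← hsumNz]
    exact hmono
  rw [hmu]
  set S : ℝ := ∑ o ∈ F, pdaUtil (θ.val i) θ s o i with hSdef
  have h1 : ((B.card.factorial : ℝ) * ((Fintype.card V - B.card - 1).factorial : ℝ))
      * Z * Δ ≤ nf * S := by
    calc ((B.card.factorial : ℝ) * ((Fintype.card V - B.card - 1).factorial : ℝ)) * Z * Δ
        ≤ (nf * Nz) * Δ := mul_le_mul_of_nonneg_right hcast hΔ0
      _ = nf * (Nz * Δ) := by ring
      _ ≤ nf * S := mul_le_mul_of_nonneg_left hS (le_of_lt hnf0)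
  have hL : ((B.card.factorial : ℝ) * ((Fintype.card V - B.card - 1).factorial : ℝ)) / nf
      * (Z / nf) * Δ
      = (((B.card.factorial : ℝ) * ((Fintype.card V - B.card - 1).factorial : ℝ))
          * Z * Δ) / (nf * nf) := by
    field_simp
  rw [hL, div_le_div_iff₀ (by positivity) hnf0]
  calc ((B.card.factorial : ℝ) * ((Fintype.card V - B.card - 1).factorial : ℝ))
      * Z * Δ * nf ≤ (nf * S) * nf := mul_le_mul_of_nonneg_right h1 (le_of_lt hnf0)
    _ = S * (nf * nf) := by ring

lemma per_fiber_upper (hθ : θ.Valid s) {i : V} (hi : i ≠ s)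
    {B : Finset V} (hiB : i ∉ B) :
    (∑ o ∈ Finset.univ.filter
        (fun o : V ≃ Fin (Fintype.card V) =>
          (Finset.univ.filter fun j => o j < o i) = B),
      pdaUtil (θ.val i) θ s o i) / ((Fintype.card V).factorial : ℝ)
    ≤ ((B.card.factorial * (Fintype.card V - B.card - 1).factorial : ℝ) /
        ((Fintype.card V).factorial : ℝ)) *
      (SWstar θ s (↑(insert i B)) 0 - SWstar θ s (↑B) 0) := by
  set nf : ℝ := ((Fintype.card V).factorial : ℝ) with hnf
  have hnf0 : (0 : ℝ) < nf := by
    rw [hnf]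
    exact_mod_cast Nat.factorial_pos _
  set Δ : ℝ := SWstar θ s (↑(insert i B)) 0 - SWstar θ s (↑B) 0 with hΔ
  have hΔ0 : 0 ≤ Δ := by
    rw [hΔ, sub_nonneg]
    exact SWstar_zero_mono θ s hθ (Finset.coe_subset.2 (Finset.subset_insert i B))
  set F := Finset.univ.filter
      (fun o : V ≃ Fin (Fintype.card V) =>
        (Finset.univ.filter fun j => o j < o i) = B) with hF
  have hub : ∀ o ∈ F, pdaUtil (θ.val i) θ s o i ≤ Δ := by
    intro o ho
    rw [hF, Finset.mem_filter] at ho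
    have := pdaUtil_le θ s o hθ hi
    rwa [predeq_set_of_fiber o ho.2, pred_set_of_fiber o ho.2] at this
  have hsum : ∑ o ∈ F, pdaUtil (θ.val i) θ s o i ≤ (F.card : ℝ) * Δ := by
    calc ∑ o ∈ F, pdaUtil (θ.val i) θ s o i ≤ ∑ _o ∈ F, Δ := Finset.sum_le_sum hub
      _ = (F.card : ℝ) * Δ := by rw [Finset.sum_const, nsmul_eq_mul]
  have hcf := count_fiber (V := V) (B := B) (i := i) hiB
  have hd : (Finset.univ \ insert i B).card = Fintype.card V - B.card - 1 := by
    have := card_split B i hiB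
    omega
  rw [hd] at hcf
  have hFcard : F.card = Fintype.card {o : V ≃ Fin (Fintype.card V) //
      (Finset.univ.filter fun j => o j < o i) = B} := by
    rw [Fintype.card_subtype, hF]
  have hcf' : (F.card : ℝ) ≤ (B.card.factorial : ℝ)
      * ((Fintype.card V - B.card - 1).factorial : ℝ) := by
    rw [hFcard]
    exact_mod_cast hcf
  have h2 : ∑ o ∈ F, pdaUtil (θ.val i) θ s o i
      ≤ ((B.card.factorial : ℝ) * ((Fintype.card V - B.card - 1).factorial : ℝ)) * Δ :=
    le_trans hsum (mul_le_mul_of_nonneg_right hcf' hΔ0)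
  rw [div_mul_eq_mul_div, div_le_div_iff₀ hnf0 hnf0]
  exact mul_le_mul_of_nonneg_right h2 (le_of_lt hnf0)

end Assembly
end DA
set_option linter.unusedSectionVars false in
theorem pda_expUtil_shapley_bounds' {V : Type*} [Fintype V] [DecidableEq V]
    {k : ℕ} (hk : 1 ≤ k) (θ : DA.Profile V k) (s : V) (hθ : θ.Valid s)
    (i : V) (hi : i ≠ s) :
    (∑ B ∈ (Finset.univ.erase i).powerset,
        ((B.card.factorial * (Fintype.card V - B.card - 1).factorial : ℝ) /
          ((Fintype.card V).factorial : ℝ)) *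
        DA.mu (θ.restrict ↑B) s *
        (DA.SWstar θ s (↑(insert i B)) 0 - DA.SWstar θ s (↑B) 0)
      ≤ DA.pdaExpUtil (θ.val i) θ s i)
    ∧ (⨅ B : Finset V, DA.mu (θ.restrict ↑B) s) * DA.shapley θ s i
        ≤ DA.pdaExpUtil (θ.val i) θ s i
    ∧ DA.pdaExpUtil (θ.val i) θ s i ≤ DA.shapley θ s i := by
  classical
  have hg : ∀ o : V ≃ Fin (Fintype.card V),
      (Finset.univ.filter fun j => o j < o i) ∈ (Finset.univ.erase i).powerset := by
    intro o
    rw [Finset.mem_powerset]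
    intro j hj
    have hj' := (Finset.mem_filter.1 hj).2
    refine Finset.mem_erase.2 ⟨?_, Finset.mem_univ _⟩
    intro hji
    rw [hji] at hj'
    exact lt_irrefl _ hj'
  have hiB : ∀ B ∈ (Finset.univ.erase i).powerset, i ∉ B := by
    intro B hB hiBmem
    have := (Finset.mem_powerset.1 hB) hiBmem
    exact (Finset.mem_erase.1 this).1 rfl
  have hsplit : ∑ B ∈ (Finset.univ.erase i).powerset,
      ∑ o ∈ Finset.univ.filter (fun o : V ≃ Fin (Fintype.card V) =>
        (Finset.univ.filter fun j => o j < o i) = B), DA.pdaUtil (θ.val i) θ s o i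
      = ∑ o : V ≃ Fin (Fintype.card V), DA.pdaUtil (θ.val i) θ s o i :=
    Finset.sum_fiberwise_of_maps_to (fun o _ => hg o) _
  have hE : DA.pdaExpUtil (θ.val i) θ s i
      = ∑ B ∈ (Finset.univ.erase i).powerset,
          (∑ o ∈ Finset.univ.filter (fun o : V ≃ Fin (Fintype.card V) =>
            (Finset.univ.filter fun j => o j < o i) = B),
            DA.pdaUtil (θ.val i) θ s o i) / ((Fintype.card V).factorial : ℝ) := by
    rw [DA.pdaExpUtil, ← hsplit, Finset.sum_div]
  have hpart1 : ∑ B ∈ (Finset.univ.erase i).powerset,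
      ((B.card.factorial * (Fintype.card V - B.card - 1).factorial : ℝ) /
        ((Fintype.card V).factorial : ℝ)) *
      DA.mu (θ.restrict ↑B) s *
      (DA.SWstar θ s (↑(insert i B)) 0 - DA.SWstar θ s (↑B) 0)
      ≤ DA.pdaExpUtil (θ.val i) θ s i := by
    rw [hE]
    exact Finset.sum_le_sum fun B hB => DA.per_fiber_lower θ s hθ hk hi (hiB B hB)
  refine ⟨hpart1, ?_, ?_⟩
  · have hinf_le : ∀ B : Finset V,
        (⨅ B' : Finset V, DA.mu (θ.restrict ↑B') s) ≤ DA.mu (θ.restrict ↑B) s :=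
      fun B => ciInf_le (Finite.bddBelow_range _) B
    rw [DA.shapley, Finset.mul_sum]
    refine le_trans (Finset.sum_le_sum ?_) hpart1
    intro B hB
    have hΔ0 : 0 ≤ DA.SWstar θ s (↑(insert i B)) 0 - DA.SWstar θ s (↑B) 0 := by
      rw [sub_nonneg]
      exact DA.SWstar_zero_mono θ s hθ (Finset.coe_subset.2 (Finset.subset_insert i B))
    have hco : (0 : ℝ) ≤ ((B.card.factorial * (Fintype.card V - B.card - 1).factorial : ℝ) /
        ((Fintype.card V).factorial : ℝ)) := by positivity
    have hcoeffΔ : (0 : ℝ) ≤ ((B.card.factorial * (Fintype.card V - B.card - 1).factorial : ℝ) /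
        ((Fintype.card V).factorial : ℝ)) *
        (DA.SWstar θ s (↑(insert i B)) 0 - DA.SWstar θ s (↑B) 0) :=
      mul_nonneg hco hΔ0
    calc (⨅ B' : Finset V, DA.mu (θ.restrict ↑B') s) *
          (((B.card.factorial * (Fintype.card V - B.card - 1).factorial : ℝ) /
            ((Fintype.card V).factorial : ℝ)) *
            (DA.SWstar θ s (↑(insert i B)) 0 - DA.SWstar θ s (↑B) 0))
        ≤ DA.mu (θ.restrict ↑B) s *
          (((B.card.factorial * (Fintype.card V - B.card - 1).factorial : ℝ) /
            ((Fintype.card V).factorial : ℝ)) *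
            (DA.SWstar θ s (↑(insert i B)) 0 - DA.SWstar θ s (↑B) 0)) :=
          mul_le_mul_of_nonneg_right (hinf_le B) hcoeffΔ
      _ = ((B.card.factorial * (Fintype.card V - B.card - 1).factorial : ℝ) /
            ((Fintype.card V).factorial : ℝ)) *
          DA.mu (θ.restrict ↑B) s *
          (DA.SWstar θ s (↑(insert i B)) 0 - DA.SWstar θ s (↑B) 0) := by ring
  · rw [hE, DA.shapley]
    exact Finset.sum_le_sum fun B hB => DA.per_fiber_upper θ s hθ hi (hiB B hB)


/-- For a buyer i reporting her true type, her expected utility in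
PDA satisfies
E_PDA(u_i) ≥ Σ_{B ⊆ V∖{i}} [|B|!(|V|−|B|−1)!/|V|!] · μ(θ'_B) · (SW*(θ', B∪{i}) − SW*(θ', B));
consequently (inf_B μ(θ'_B)) · φ_i(θ') ≤ E_PDA(u_i) ≤ φ_i(θ'). -/
theorem pda_expUtil_shapley_bounds {V : Type*} [Fintype V] [DecidableEq V]
    {k : ℕ} (hk : 1 ≤ k) (θ : DA.Profile V k) (s : V) (hθ : θ.Valid s)
    (i : V) (hi : i ≠ s) :
    (∑ B ∈ (Finset.univ.erase i).powerset,
        ((B.card.factorial * (Fintype.card V - B.card - 1).factorial : ℝ) /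
          ((Fintype.card V).factorial : ℝ)) *
        DA.mu (θ.restrict ↑B) s *
        (DA.SWstar θ s (↑(insert i B)) 0 - DA.SWstar θ s (↑B) 0)
      ≤ DA.pdaExpUtil (θ.val i) θ s i)
    ∧ (⨅ B : Finset V, DA.mu (θ.restrict ↑B) s) * DA.shapley θ s i
        ≤ DA.pdaExpUtil (θ.val i) θ s i
    ∧ DA.pdaExpUtil (θ.val i) θ s i ≤ DA.shapley θ s i := by
  exact pda_expUtil_shapley_bounds' hk θ s hθ i hi
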